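/- arXiv:1705.06484 — 3 statements merged into one kernel-verified Lean document; each statement's English description precedes it below -/
import Mathlib

section
/- Let α ∈ (0,1) be an irrational badly approximable number. Then the set {β ∈ (0,1) : β is badly approximable with respect to α} has Hausdorff dimension 1. -/
open scoped ENNReal NNReal

/-- `α` is badly approximable: there is `c > 0` with `|α − p/q| ≥ c/q²` for all integers `p`
and nonzero integers `q`. -/
def BadlyApproximable (α : ℝ) : Prop :=
  ∃ c : ℝ, 0 < c ∧ ∀ p q : ℤ, q ≠ 0 → c / (q : ℝ) ^ 2 ≤ |α - (p : ℝ) / (q : ℝ)|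

/-- `β` is badly approximable with respect to `α`: there is `C > 0` with
`|qα − β − p| > C/|q|` for all `p ∈ ℤ` and `q ∈ ℤ \ {0}`. -/
def BadApproxWrt (α β : ℝ) : Prop :=
  ∃ C : ℝ, 0 < C ∧ ∀ p q : ℤ, q ≠ 0 → C / |(q : ℝ)| < |(q : ℝ) * α - β - (p : ℝ)|

namespace Stmt1Aux

open Set Finset

/-- Bundled hypotheses. -/
structure Setup (α c : ℝ) (k : ℕ) : Prop where
  hc0 : 0 < c
  hc1 : c ≤ 1
  hk : 10 ≤ k
  hba : ∀ p q : ℤ, q ≠ 0 → c / |(q : ℝ)| ≤ |(q : ℝ) * α - (p : ℝ)|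

/-- interval lengths -/
noncomputable def δ (c : ℝ) (k : ℕ) (n : ℕ) : ℝ := c / 256 / ((2:ℝ) ^ k) ^ n

/-- the final constant -/
noncomputable def Cst (c : ℝ) (k : ℕ) : ℝ := c / 256 / (2:ℝ) ^ k

/-- safety of the interval `[x, x + δ n]` at level `n` -/
def Safe (α c : ℝ) (k n : ℕ) (x : ℝ) : Prop :=
  ∀ q p : ℤ, q ≠ 0 → |(q : ℝ)| < ((2:ℝ) ^ k) ^ n →
    ∀ β ∈ Set.Icc x (x + δ c k n), Cst c k / |(q : ℝ)| < |(q : ℝ) * α - β - (p : ℝ)|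

variable {α c : ℝ} {k : ℕ}

lemma Npos : (0:ℝ) < (2:ℝ) ^ k := by positivity

lemma Npow_pos {n : ℕ} : (0:ℝ) < ((2:ℝ) ^ k) ^ n := by positivity

lemma δ_pos (hc : 0 < c) (n : ℕ) : 0 < δ c k n := by unfold δ; positivity

lemma Cst_pos (hc : 0 < c) : 0 < Cst c k := by unfold Cst; positivity

lemma δ_succ_mul (n : ℕ) : δ c k (n+1) * (2:ℝ) ^ k = δ c k n := by
  have h : ((2:ℝ)^k) ≠ 0 := ne_of_gt Npos
  have h2 : (((2:ℝ)^k)^n) ≠ 0 := ne_of_gt Npow_pos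
  unfold δ
  field_simp [δ, pow_succ]
  ring

lemma Cst_div_le (hc : 0 < c) {n : ℕ} {t : ℝ} (ht : ((2:ℝ)^k)^n ≤ t) :
    Cst c k / t ≤ δ c k (n+1) := by
  have h0 : (0:ℝ) < ((2:ℝ)^k)^n := Npow_pos
  have ht0 : 0 < t := lt_of_lt_of_le h0 ht
  have h1 : Cst c k / t ≤ Cst c k / ((2:ℝ)^k)^n :=
    div_le_div_of_nonneg_left (le_of_lt (Cst_pos hc)) h0 ht
  have h2 : Cst c k / ((2:ℝ)^k)^n = δ c k (n+1) := by
    unfold Cst δ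
    rw [pow_succ]
    field_simp
  linarith

/-- separation of danger points -/
lemma danger_sep (H : Setup α c k) {q p q' p' : ℤ} (hq : q ≠ 0) (hq' : q' ≠ 0)
    (hne : (q, p) ≠ (q', p')) {Q : ℝ} (hQ1 : 1 ≤ Q)
    (hqQ : |(q:ℝ)| ≤ Q) (hq'Q : |(q':ℝ)| ≤ Q) :
    c / (2 * Q) ≤ |((q:ℝ) * α - p) - ((q':ℝ) * α - p')| := by
  have hQ0 : (0:ℝ) < 2 * Q := by linarith
  rcases eq_or_ne q q' with rfl | hqq
  · have hpp : p ≠ p' := by simpa [hne.symm] using fun h => hne (by simp [h])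
    have h1 : (1:ℝ) ≤ |((p':ℤ):ℝ) - ((p:ℤ):ℝ)| := by
      rw [← Int.cast_sub, ← Int.cast_abs]
      exact_mod_cast Int.one_le_abs (sub_ne_zero.mpr (Ne.symm hpp))
    have : c / (2 * Q) ≤ 1 := by
      rw [div_le_one hQ0]; linarith [H.hc1]
    have he : ((q:ℝ) * α - p) - ((q:ℝ) * α - p') = ((p':ℤ):ℝ) - p := by push_cast; ring
    rw [he]; linarith
  · have hd : q - q' ≠ 0 := sub_ne_zero.mpr hqq
    have hsep := H.hba (p - p') (q - q') hd
    have habs : |((q - q' : ℤ):ℝ)| ≤ 2 * Q := by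
      push_cast
      calc |(q:ℝ) - q'| ≤ |(q:ℝ)| + |(q':ℝ)| := abs_sub _ _
        _ ≤ 2 * Q := by linarith
    have h0 : (0:ℝ) < |((q - q' : ℤ):ℝ)| := by
      rw [abs_pos]; exact_mod_cast hd
    have h1 : c / (2 * Q) ≤ c / |((q - q' : ℤ):ℝ)| :=
      div_le_div_of_nonneg_left (le_of_lt H.hc0) h0 habs
    have h2 : c / |((q - q' : ℤ):ℝ)| ≤ |((q - q':ℤ):ℝ) * α - ((p - p':ℤ):ℝ)| := hsep
    have he : ((q:ℝ) * α - p) - ((q':ℝ) * α - p') = ((q - q':ℤ):ℝ) * α - ((p - p':ℤ):ℝ) := by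
      push_cast; ring
    rw [he]; linarith

lemma safe_zero (H : Setup α c k) : Safe α c k 0 (1/4 : ℝ) := by
  intro q p hq0 hqlt β hβ
  exfalso
  rw [pow_zero] at hqlt
  have h1 : (1:ℝ) ≤ |(q:ℝ)| := by
    have := Int.one_le_abs hq0
    calc (1:ℝ) = ((1:ℤ):ℝ) := by norm_num
      _ ≤ ((|q|:ℤ):ℝ) := by exact_mod_cast this
      _ = |(q:ℝ)| := by push_cast; ring
  linarith


theorem exists_children (H : Setup α c k) (n : ℕ) {x : ℝ} (hx : Safe α c k n x) :
    ∃ g : Fin (2^(k-3)) → ℕ, StrictMono g ∧ (∀ i, Even (g i)) ∧ (∀ i, g i < 2^k) ∧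
      ∀ i, Safe α c k (n+1) (x + g i * δ c k (n+1)) := by
  classical
  obtain ⟨e, rfl⟩ : ∃ e, k = e + 7 := ⟨k - 7, by have := H.hk; omega⟩
  have hpw : (2:ℝ)^(e+7) = 128 * 2^e := by rw [pow_add]; norm_num; ring
  set δ' := δ c (e+7) (n+1) with hδ'
  have hδ'0 : 0 < δ' := δ_pos H.hc0 _
  set Q : ℝ := ((2:ℝ)^(e+7))^(n+1) with hQ
  have hQ1 : (1:ℝ) ≤ Q := one_le_pow₀ (one_le_pow₀ (by norm_num))
  set s : ℝ := c / (2 * Q) with hs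
  have hs0 : 0 < s := by rw [hs, hQ]; have := H.hc0; positivity
  have hs128 : s = 128 * δ' := by
    rw [hs, hδ']; unfold δ; rw [hQ]; field_simp; ring
  set Bad : Finset ℕ := (Finset.range (2^(e+7))).filter
      (fun j => ¬ Safe α c (e+7) (n+1) (x + j * δ')) with hBad
  have key : ∀ j ∈ Bad, ∃ qp : ℤ × ℤ, qp.1 ≠ 0 ∧ |((qp.1:ℤ):ℝ)| < Q ∧
      ((qp.1:ℝ) * α - qp.2) ∈ Set.Icc (x + j*δ' - δ') (x + j*δ' + 2*δ') := by
    intro j hj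
    simp only [hBad, Finset.mem_filter, Finset.mem_range] at hj
    obtain ⟨hjN, hns⟩ := hj
    rw [Safe] at hns
    push_neg at hns
    obtain ⟨q, p, hq0, hqlt, β, hβ, hle⟩ := hns
    have hj1 : ((j:ℝ) + 1) ≤ (2:ℝ)^(e+7) := by exact_mod_cast hjN
    have hβ' : β ∈ Set.Icc x (x + δ c (e+7) n) := by
      obtain ⟨hβ1, hβ2⟩ := hβ
      constructor
      · nlinarith [Nat.cast_nonneg (α := ℝ) j]
      · have h1 : (j:ℝ) * δ' + δ' ≤ (2:ℝ)^(e+7) * δ' := by nlinarith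
        have h2 : (2:ℝ)^(e+7) * δ' = δ c (e+7) n := by rw [mul_comm]; exact δ_succ_mul n
        linarith
    have hqge : ((2:ℝ)^(e+7))^n ≤ |(q:ℝ)| := by
      by_contra hlt
      push_neg at hlt
      exact absurd hle (not_le.mpr (hx q p hq0 hlt β hβ'))
    have hsmall : Cst c (e+7) / |(q:ℝ)| ≤ δ' := Cst_div_le H.hc0 hqge
    refine ⟨(q,p), hq0, hqlt, ?_⟩
    have habs : |(q:ℝ) * α - β - p| ≤ δ' := le_trans hle hsmall
    obtain ⟨hβ1, hβ2⟩ := hβ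
    rw [abs_le] at habs
    constructor
    · simp only; linarith [habs.1]
    · simp only; linarith [habs.2]
  choose qp hqp0 hqplt hqpmem using key
  set w : ∀ j ∈ Bad, ℝ := fun j hj => ((qp j hj).1 : ℝ) * α - ((qp j hj).2 : ℝ) with hw
  set F : ℕ → ℤ × ℤ := fun j => if hj : j ∈ Bad then
      (⌊(w j hj - x)/s⌋, (j:ℤ) - ⌊(w j hj - x)/δ'⌋) else (0,0) with hF
  have hFeq : ∀ j (hj : j ∈ Bad),
      F j = (⌊(w j hj - x)/s⌋, (j:ℤ) - ⌊(w j hj - x)/δ'⌋) := fun j hj => dif_pos hj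
  have hwmem : ∀ j (hj : j ∈ Bad),
      w j hj ∈ Set.Icc (x + j*δ' - δ') (x + j*δ' + 2*δ') := fun j hj => hqpmem j hj
  have hmaps : ∀ j ∈ Bad,
      F j ∈ (Finset.Icc (-1 : ℤ) (2^e : ℤ)) ×ˢ (Finset.Icc (-2:ℤ) 1) := by
    intro j hj
    have hjN : j < 2^(e+7) := Finset.mem_range.mp (Finset.mem_filter.mp hj).1
    have hj1 : ((j:ℝ) + 1) ≤ (2:ℝ)^(e+7) := by exact_mod_cast hjN
    obtain ⟨hw1, hw2⟩ := hwmem j hj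
    rw [hFeq j hj, Finset.mem_product, Finset.mem_Icc, Finset.mem_Icc]
    have hjnn : (0:ℝ) ≤ (j:ℝ) := Nat.cast_nonneg j
    refine ⟨⟨?_, ?_⟩, ?_, ?_⟩
    · rw [Int.le_floor]
      rw [show (((-1:ℤ)):ℝ) = -1 by norm_num, le_div_iff₀ hs0]
      nlinarith
    · have hlt : (w j hj - x)/s < ((2^e : ℤ):ℝ) + 1 := by
        rw [div_lt_iff₀ hs0, hs128]
        push_cast
        nlinarith
      have := Int.floor_lt.mpr (by push_cast at hlt ⊢; linarith : (w j hj - x)/s < (((2^e : ℤ) + 1 : ℤ):ℝ))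
      omega
    · have hfu : ⌊(w j hj - x)/δ'⌋ ≤ (j:ℤ) + 2 := by
        have h1 : (w j hj - x)/δ' ≤ (((j:ℤ) + 2 : ℤ):ℝ) := by
          rw [div_le_iff₀ hδ'0]
          push_cast
          nlinarith
        have := Int.floor_le_floor h1
        rwa [Int.floor_intCast] at this
      omega
    · have hfl : ((j:ℤ) - 1 : ℤ) ≤ ⌊(w j hj - x)/δ'⌋ := by
        rw [Int.le_floor]
        rw [show (((j:ℤ) - 1 : ℤ):ℝ) = (j:ℝ) - 1 by push_cast; ring, le_div_iff₀ hδ'0]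
        nlinarith
      omega
  have hinj : Set.InjOn F ↑Bad := by
    intro j hj j' hj' heq
    rw [Finset.mem_coe] at hj hj'
    rw [hFeq j hj, hFeq j' hj'] at heq
    have h1 : ⌊(w j hj - x)/s⌋ = ⌊(w j' hj' - x)/s⌋ := congrArg Prod.fst heq
    have h2 : (j:ℤ) - ⌊(w j hj - x)/δ'⌋ = (j':ℤ) - ⌊(w j' hj' - x)/δ'⌋ := congrArg Prod.snd heq
    have hww : w j hj = w j' hj' := by
      rcases eq_or_ne (qp j hj) (qp j' hj') with he | hne'
      · show ((qp j hj).1 : ℝ) * α - ((qp j hj).2 : ℝ) = _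
        rw [he]
      · exfalso
        have hfl := Int.abs_sub_lt_one_of_floor_eq_floor h1
        have hlt : |w j hj - w j' hj'| < s := by
          have hr : (w j hj - x)/s - (w j' hj' - x)/s = (w j hj - w j' hj')/s := by ring
          rw [hr, abs_div, abs_of_pos hs0, div_lt_one hs0] at hfl
          exact hfl
        have hsep := danger_sep H (hqp0 j hj) (hqp0 j' hj')
          (by rw [Prod.mk.eta, Prod.mk.eta]; exact hne') hQ1 (le_of_lt (hqplt j hj)) (le_of_lt (hqplt j' hj'))
        rw [← hs] at hsep
        have : s ≤ |w j hj - w j' hj'| := hsep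
        linarith
    rw [hww] at h2
    have : (j:ℤ) = (j':ℤ) := by omega
    exact_mod_cast this
  have hcardprod : ((Finset.Icc (-1 : ℤ) (2^e : ℤ)) ×ˢ (Finset.Icc (-2:ℤ) 1)).card
      = (2^e + 2) * 4 := by
    rw [Finset.card_product, Int.card_Icc, Int.card_Icc]
    have h1 : ((2:ℤ)^e + 1 - (-1)).toNat = 2^e + 2 := by
      rw [show ((2:ℤ)^e + 1 - (-1)) = ((2^e + 2 : ℕ) : ℤ) by push_cast; ring, Int.toNat_natCast]
    rw [h1]
    rfl
  have hBadcard : Bad.card ≤ (2^e + 2) * 4 := by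
    have h := Finset.card_le_card_of_injOn F hmaps hinj
    rwa [hcardprod] at h
  set Evens : Finset ℕ := (Finset.range (2^(e+6))).image (fun t => 2*t) with hEvens
  have hEcard : Evens.card = 2^(e+6) := by
    rw [hEvens, Finset.card_image_of_injective _ (mul_right_injective₀ (by norm_num : (2:ℕ) ≠ 0)), Finset.card_range]
  have hGoodcard : 2^(e+7-3) ≤ (Evens \ Bad).card := by
    have h1 := Finset.le_card_sdiff Bad Evens
    have hP : 1 ≤ 2^e := Nat.one_le_two_pow
    have e1 : 2^(e+6) = 64 * 2^e := by rw [pow_add]; ring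
    have e2 : 2^(e+7-3) = 16 * 2^e := by
      rw [show e+7-3 = e+4 by omega, pow_add]; ring
    omega
  refine ⟨fun i => (Evens \ Bad).orderEmbOfCardLe hGoodcard i, ?_, ?_, ?_, ?_⟩
  · exact fun i j hij => ((Evens \ Bad).orderEmbOfCardLe hGoodcard).strictMono hij
  · intro i
    beta_reduce
    have hmem := Finset.mem_sdiff.mp (Finset.orderEmbOfCardLe_mem _ hGoodcard i)
    obtain ⟨t, htm, ht⟩ := Finset.mem_image.mp hmem.1
    beta_reduce at ht
    exact ⟨t, by omega⟩
  · intro i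
    beta_reduce
    have hmem := Finset.mem_sdiff.mp (Finset.orderEmbOfCardLe_mem _ hGoodcard i)
    obtain ⟨t, htm, ht⟩ := Finset.mem_image.mp hmem.1
    beta_reduce at ht
    rw [Finset.mem_range] at htm
    have : 2^(e+7) = 2 * 2^(e+6) := by rw [pow_succ]; ring
    omega
  · intro i
    beta_reduce
    have hmem := Finset.mem_sdiff.mp (Finset.orderEmbOfCardLe_mem _ hGoodcard i)
    obtain ⟨hmE, hmB⟩ := hmem
    by_contra hns
    apply hmB
    have hlt : (Evens \ Bad).orderEmbOfCardLe hGoodcard i < 2^(e+7) := by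
      obtain ⟨t, htm, ht⟩ := Finset.mem_image.mp hmE
      beta_reduce at ht
      rw [Finset.mem_range] at htm
      have : 2^(e+7) = 2 * 2^(e+6) := by rw [pow_succ]; ring
      omega
    exact Finset.mem_filter.mpr ⟨Finset.mem_range.mpr hlt, hns⟩


-- chunk 3: recursion, Phi, membership
variable {α c : ℝ} {k : ℕ}

open scoped Classical in
/-- chosen children offsets -/
noncomputable def child (H : Setup α c k) (n : ℕ) (x : ℝ) : Fin (2^(k-3)) → ℕ :=
  if h : Safe α c k n x then Classical.choose (exists_children H n h) else fun _ => 0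

lemma child_spec (H : Setup α c k) {n : ℕ} {x : ℝ} (h : Safe α c k n x) :
    StrictMono (child H n x) ∧ (∀ i, Even (child H n x i)) ∧ (∀ i, child H n x i < 2^k) ∧
      ∀ i, Safe α c k (n+1) (x + child H n x i * δ c k (n+1)) := by
  classical
  rw [child]
  rw [dif_pos h]
  exact Classical.choose_spec (exists_children H n h)

/-- left endpoints of the nested intervals -/
noncomputable def pts (H : Setup α c k) (σ : ℕ → Fin (2^(k-3))) : ℕ → ℝ
  | 0 => 1/4
  | n+1 => pts H σ n + child H n (pts H σ n) (σ n) * δ c k (n+1)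

lemma safe_pts (H : Setup α c k) (σ : ℕ → Fin (2^(k-3))) (n : ℕ) :
    Safe α c k n (pts H σ n) := by
  induction n with
  | zero => exact safe_zero H
  | succ n ih => exact ((child_spec H ih).2.2.2 (σ n))

lemma pts_mono_step (H : Setup α c k) (σ : ℕ → Fin (2^(k-3))) (n : ℕ) :
    pts H σ n ≤ pts H σ (n+1) := by
  have h : pts H σ (n+1) = pts H σ n + child H n (pts H σ n) (σ n) * δ c k (n+1) := rfl
  rw [h]
  have := δ_pos (k := k) H.hc0 (n+1)
  nlinarith [Nat.cast_nonneg (α := ℝ) (child H n (pts H σ n) (σ n))]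

lemma pts_mono (H : Setup α c k) (σ : ℕ → Fin (2^(k-3))) : Monotone (pts H σ) :=
  monotone_nat_of_le_succ (pts_mono_step H σ)

lemma pts_delta_anti (H : Setup α c k) (σ : ℕ → Fin (2^(k-3))) {n K : ℕ} (h : n ≤ K) :
    pts H σ K + δ c k K ≤ pts H σ n + δ c k n := by
  induction K with
  | zero => rw [Nat.le_zero.mp h]
  | succ K ih =>
    rcases Nat.lt_or_ge n (K+1) with hlt | hge
    · have hK : n ≤ K := Nat.lt_succ_iff.mp hlt
      refine le_trans ?_ (ih hK)
      have hstep : pts H σ (K+1) = pts H σ K + child H K (pts H σ K) (σ K) * δ c k (K+1) := rfl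
      have hc : (child H K (pts H σ K) (σ K) : ℝ) ≤ (2:ℝ)^k - 1 := by
        have h1 := (child_spec H (safe_pts H σ K)).2.2.1 (σ K)
        have h2 : (child H K (pts H σ K) (σ K) : ℝ) + 1 ≤ (2:ℝ)^k := by
          have : ((child H K (pts H σ K) (σ K) + 1 : ℕ) : ℝ) ≤ ((2^k : ℕ):ℝ) := by
            exact_mod_cast h1
          push_cast at this; linarith
        linarith
      have hδ := δ_pos (k := k) H.hc0 (K+1)
      have hmul := δ_succ_mul (c := c) (k := k) K
      rw [hstep]
      nlinarith
    · have : n = K + 1 := le_antisymm h hge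
      rw [this]

lemma pts_bounds (H : Setup α c k) (σ : ℕ → Fin (2^(k-3))) {n K : ℕ} (h : n ≤ K) :
    pts H σ K ∈ Set.Icc (pts H σ n) (pts H σ n + δ c k n) := by
  constructor
  · exact pts_mono H σ h
  · have := pts_delta_anti H σ h
    have := δ_pos (k := k) H.hc0 K
    linarith

/-- the limit point -/
noncomputable def Phi (H : Setup α c k) (σ : ℕ → Fin (2^(k-3))) : ℝ := ⨆ n, pts H σ n

lemma pts_bddAbove (H : Setup α c k) (σ : ℕ → Fin (2^(k-3))) :
    BddAbove (Set.range (pts H σ)) := by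
  refine ⟨pts H σ 0 + δ c k 0, ?_⟩
  rintro y ⟨K, rfl⟩
  exact (pts_bounds H σ (Nat.zero_le K)).2

lemma Phi_mem_Icc (H : Setup α c k) (σ : ℕ → Fin (2^(k-3))) (n : ℕ) :
    Phi H σ ∈ Set.Icc (pts H σ n) (pts H σ n + δ c k n) := by
  constructor
  · exact le_ciSup (pts_bddAbove H σ) n
  · refine ciSup_le fun K => ?_
    rcases le_total K n with h | h
    · have h1 := pts_mono H σ h
      have := δ_pos (k := k) H.hc0 n
      linarith
    · exact (pts_bounds H σ h).2

lemma Phi_mem_Ioo (H : Setup α c k) (σ : ℕ → Fin (2^(k-3))) :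
    Phi H σ ∈ Set.Ioo (0:ℝ) 1 := by
  have h := Phi_mem_Icc H σ 0
  have h0 : pts H σ 0 = 1/4 := rfl
  have hδ : δ c k 0 = c / 256 := by unfold δ; rw [pow_zero]; ring_nf
  rw [h0] at h
  constructor
  · have := h.1; linarith
  · have := h.2; rw [hδ] at this; have := H.hc1; linarith [h.2, H.hc1]

lemma Phi_badApprox (H : Setup α c k) (σ : ℕ → Fin (2^(k-3))) :
    ∀ q p : ℤ, q ≠ 0 → Cst c k / |(q:ℝ)| < |(q:ℝ) * α - Phi H σ - (p:ℝ)| := by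
  intro q p hq
  have hlt : |(q:ℝ)| < ((2:ℝ)^k)^(q.natAbs + 1) := by
    have h1 : |(q:ℝ)| = (q.natAbs : ℝ) := by
      simp [Nat.cast_natAbs]
    rw [h1]
    have h2 : (q.natAbs : ℝ) < (2:ℝ)^(q.natAbs + 1) := by
      have hn : q.natAbs < 2^(q.natAbs + 1) := by
        have h3 := Nat.lt_two_pow_self (n := q.natAbs)
        have h4 := Nat.pow_le_pow_right (by norm_num : 1 ≤ 2) (Nat.le_succ q.natAbs)
        omega
      calc (q.natAbs : ℝ) < ((2^(q.natAbs+1) : ℕ) : ℝ) := by exact_mod_cast hn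
        _ = (2:ℝ)^(q.natAbs+1) := by push_cast; ring
    calc (q.natAbs : ℝ) < (2:ℝ)^(q.natAbs+1) := h2
      _ ≤ ((2:ℝ)^k)^(q.natAbs+1) := by
        apply pow_le_pow_left₀ (by norm_num)
        have : (2:ℝ)^1 ≤ (2:ℝ)^k := pow_le_pow_right₀ (by norm_num) (by have := H.hk; omega)
        simpa using this
  exact safe_pts H σ (q.natAbs + 1) q p hq hlt (Phi H σ) (Phi_mem_Icc H σ (q.natAbs + 1))

/-- separation: if two digit sequences first differ at index `n`,
the images are at least `δ (n+1)` apart -/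
lemma Phi_sep (H : Setup α c k) {σ τ : ℕ → Fin (2^(k-3))} {n : ℕ}
    (hagree : ∀ j < n, σ j = τ j) (hne : σ n ≠ τ n) :
    δ c k (n+1) ≤ |Phi H σ - Phi H τ| := by
  have hpts : pts H σ n = pts H τ n := by
    clear hne
    induction n with
    | zero => rfl
    | succ n ih =>
      have h1 : pts H σ n = pts H τ n := ih (fun j hj => hagree j (by omega))
      have h2 : σ n = τ n := hagree n (by omega)
      show pts H σ n + _ = pts H τ n + _
      rw [h1, h2]
  set x := pts H σ n with hx
  have hsafe : Safe α c k n x := safe_pts H σ n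
  have hspec := child_spec H hsafe
  have hδ'0 := δ_pos (k := k) H.hc0 (n+1)
  have hσ1 : pts H σ (n+1) = x + child H n x (σ n) * δ c k (n+1) := rfl
  have hτ1 : pts H τ (n+1) = x + child H n x (τ n) * δ c k (n+1) := by
    show pts H τ n + child H n (pts H τ n) (τ n) * δ c k (n+1) = _
    rw [← hpts]
  have hσm := Phi_mem_Icc H σ (n+1)
  have hτm := Phi_mem_Icc H τ (n+1)
  rw [hσ1] at hσm
  rw [hτ1] at hτm
  have hgapnat : child H n x (σ n) + 2 ≤ child H n x (τ n) ∨
      child H n x (τ n) + 2 ≤ child H n x (σ n) := by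
    obtain ⟨a, ha⟩ := hspec.2.1 (σ n)
    obtain ⟨b, hb⟩ := hspec.2.1 (τ n)
    have hd : child H n x (σ n) ≠ child H n x (τ n) := fun h => hne (hspec.1.injective h)
    omega
  rcases hgapnat with hcase | hcase
  · have hcast : ((child H n x (σ n) : ℕ):ℝ) + 2 ≤ ((child H n x (τ n) : ℕ):ℝ) := by
      exact_mod_cast hcase
    have hdiff : δ c k (n+1) ≤ Phi H τ - Phi H σ := by
      nlinarith [hσm.2, hτm.1, mul_nonneg
        (by linarith : (0:ℝ) ≤ ((child H n x (τ n):ℕ):ℝ) - ((child H n x (σ n):ℕ):ℝ) - 2)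
        hδ'0.le]
    rw [abs_sub_comm, abs_of_nonneg (by linarith)]
    exact hdiff
  · have hcast : ((child H n x (τ n) : ℕ):ℝ) + 2 ≤ ((child H n x (σ n) : ℕ):ℝ) := by
      exact_mod_cast hcase
    have hdiff : δ c k (n+1) ≤ Phi H σ - Phi H τ := by
      nlinarith [hτm.2, hσm.1, mul_nonneg
        (by linarith : (0:ℝ) ≤ ((child H n x (σ n):ℕ):ℝ) - ((child H n x (τ n):ℕ):ℝ) - 2)
        hδ'0.le]
    rw [abs_of_nonneg (by linarith)]
    exact hdiff

section VV
open Filter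
noncomputable def Vmap (m : ℕ) (σ : ℕ → Fin m) : ℝ := ∑' i, ((σ i : ℕ) : ℝ) / (m:ℝ)^(i+1)

lemma geom_summable {m : ℕ} (hm : 2 ≤ m) : Summable (fun i : ℕ => ((m:ℝ)⁻¹)^i) := by
  have hm1 : (1:ℝ) < m := by exact_mod_cast hm
  refine summable_geometric_of_lt_one (by positivity) ?_
  rw [inv_eq_one_div, div_lt_one (by linarith)]
  linarith

lemma term_bound {m : ℕ} (hm : 2 ≤ m) (σ : ℕ → Fin m) (i : ℕ) :
    ((σ i : ℕ) : ℝ) / (m:ℝ)^(i+1) ≤ ((m:ℝ)⁻¹)^i := by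
  have hm0 : (0:ℝ) < m := by positivity
  have h1 : ((σ i : ℕ) : ℝ) ≤ m := le_of_lt (by exact_mod_cast (σ i).isLt)
  have h2 : (0:ℝ) < (m:ℝ)^(i+1) := by positivity
  rw [div_le_iff₀ h2]
  have h3 : ((m:ℝ)⁻¹)^i * (m:ℝ)^(i+1) = m := by
    rw [pow_succ, ← mul_assoc, ← mul_pow, inv_mul_cancel₀ hm0.ne', one_pow, one_mul]
  rw [h3]; exact h1

lemma Vmap_summable {m : ℕ} (hm : 2 ≤ m) (σ : ℕ → Fin m) :
    Summable (fun i => ((σ i : ℕ) : ℝ) / (m:ℝ)^(i+1)) :=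
  Summable.of_nonneg_of_le (fun i => by positivity) (term_bound hm σ) (geom_summable hm)

lemma Vmap_dist {m : ℕ} (hm : 2 ≤ m) (σ τ : ℕ → Fin m) (n : ℕ)
    (hagree : ∀ i < n, σ i = τ i) :
    |Vmap m σ - Vmap m τ| ≤ 4 * ((m:ℝ)⁻¹)^n := by
  have hm0 : (0:ℝ) < m := by positivity
  have hσ := Vmap_summable hm σ
  have hτ := Vmap_summable hm τ
  have hf : Summable (fun i => ((σ i : ℕ) : ℝ)/(m:ℝ)^(i+1) - ((τ i : ℕ) : ℝ)/(m:ℝ)^(i+1)) :=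
    hσ.sub hτ
  set f : ℕ → ℝ := fun i => ((σ i : ℕ) : ℝ)/(m:ℝ)^(i+1) - ((τ i : ℕ) : ℝ)/(m:ℝ)^(i+1) with hfdef
  have hfabs : Summable (fun i => |f i|) := hf.abs
  have hVdiff : Vmap m σ - Vmap m τ = ∑' i, f i := (Summable.tsum_sub hσ hτ).symm
  have habs : |∑' i, f i| ≤ ∑' i, |f i| := by
    rw [abs_le]
    constructor
    · have h1 : ∑' i, (-|f i|) ≤ ∑' i, f i :=
        Summable.tsum_le_tsum (fun i => neg_abs_le (f i)) hfabs.neg hf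
      rw [tsum_neg] at h1
      linarith
    · exact Summable.tsum_le_tsum (fun i => le_abs_self (f i)) hf hfabs
  have hzero : ∀ i < n, |f i| = 0 := by
    intro i hi
    simp [hfdef, hagree i hi]
  have hbound : ∀ i, |f (i + n)| ≤ (2 * ((m:ℝ)⁻¹)^n) * ((m:ℝ)⁻¹)^i := by
    intro i
    have h1 : |f (i+n)| ≤ ((σ (i+n) : ℕ) : ℝ)/(m:ℝ)^(i+n+1) + ((τ (i+n) : ℕ) : ℝ)/(m:ℝ)^(i+n+1) := by
      rw [hfdef]
      refine le_trans (abs_sub _ _) ?_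
      rw [abs_of_nonneg (by positivity), abs_of_nonneg (by positivity)]
    have h2 := term_bound hm σ (i+n)
    have h3 := term_bound hm τ (i+n)
    have h4 : ((m:ℝ)⁻¹)^(i+n) = ((m:ℝ)⁻¹)^n * ((m:ℝ)⁻¹)^i := by
      rw [← pow_add]; ring_nf
    calc |f (i+n)| ≤ _ + _ := h1
      _ ≤ ((m:ℝ)⁻¹)^(i+n) + ((m:ℝ)⁻¹)^(i+n) := add_le_add h2 h3
      _ = (2 * ((m:ℝ)⁻¹)^n) * ((m:ℝ)⁻¹)^i := by rw [h4]; ring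
  have hsplit := (Summable.sum_add_tsum_nat_add (f := fun i => |f i|) n hfabs).symm
  have hfirst : ∑ i ∈ range n, |f i| = 0 :=
    Finset.sum_eq_zero (fun i hi => hzero i (Finset.mem_range.mp hi))
  have hgeo : Summable (fun i : ℕ => (2 * ((m:ℝ)⁻¹)^n) * ((m:ℝ)⁻¹)^i) :=
    (geom_summable hm).mul_left _
  have htail : ∑' i, |f (i + n)| ≤ (2 * ((m:ℝ)⁻¹)^n) * (1 - (m:ℝ)⁻¹)⁻¹ := by
    have h5 := Summable.tsum_le_tsum hbound ((summable_nat_add_iff n).mpr hfabs) hgeo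
    rwa [tsum_mul_left, tsum_geometric_of_lt_one (by positivity)
      (by rw [inv_eq_one_div, div_lt_one hm0]; exact_mod_cast hm)] at h5
  have hinv2 : (1 - (m:ℝ)⁻¹)⁻¹ ≤ 2 := by
    have hm2 : (2:ℝ) ≤ m := by exact_mod_cast hm
    have h1 : (m:ℝ)⁻¹ ≤ 1/2 := by
      rw [inv_eq_one_div, div_le_div_iff₀ hm0 (by norm_num)]
      linarith
    have h2 : (1:ℝ)/2 ≤ 1 - (m:ℝ)⁻¹ := by linarith
    calc (1 - (m:ℝ)⁻¹)⁻¹ ≤ ((1:ℝ)/2)⁻¹ := by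
          apply inv_anti₀ (by norm_num) h2
      _ = 2 := by norm_num
  have hpown : (0:ℝ) ≤ ((m:ℝ)⁻¹)^n := by positivity
  calc |Vmap m σ - Vmap m τ| = |∑' i, f i| := by rw [hVdiff]
    _ ≤ ∑' i, |f i| := habs
    _ = ∑ i ∈ range n, |f i| + ∑' i, |f (i + n)| := hsplit
    _ = ∑' i, |f (i + n)| := by rw [hfirst]; ring
    _ ≤ (2 * ((m:ℝ)⁻¹)^n) * (1 - (m:ℝ)⁻¹)⁻¹ := htail
    _ ≤ 4 * ((m:ℝ)⁻¹)^n := by nlinarith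

lemma Vmap_surj {m : ℕ} (hm : 2 ≤ m) {y : ℝ} (hy : y ∈ Set.Ico (0:ℝ) 1) :
    ∃ σ : ℕ → Fin m, Vmap m σ = y := by
  have hm0 : (0:ℝ) < m := by positivity
  have hm1 : (1:ℝ) < m := by exact_mod_cast hm
  have hgen : ∀ t : ℝ, (m:ℤ) * ⌊t⌋ ≤ ⌊(m:ℝ) * t⌋ ∧ ⌊(m:ℝ)*t⌋ < (m:ℤ) * ⌊t⌋ + m := by
    intro t
    constructor
    · apply Int.le_floor.mpr
      push_cast
      nlinarith [Int.floor_le t]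
    · apply Int.floor_lt.mpr
      push_cast
      nlinarith [Int.lt_floor_add_one t]
  set d : ℕ → ℤ := fun i => ⌊y * (m:ℝ)^(i+1)⌋ - m * ⌊y * (m:ℝ)^i⌋ with hd
  have hkey : ∀ i, 0 ≤ d i ∧ d i < m := by
    intro i
    have hrw : y * (m:ℝ)^(i+1) = (m:ℝ) * (y * (m:ℝ)^i) := by rw [pow_succ]; ring
    have hg := hgen (y * (m:ℝ)^i)
    constructor
    · show 0 ≤ ⌊y * (m:ℝ)^(i+1)⌋ - (m:ℤ) * ⌊y * (m:ℝ)^i⌋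
      rw [hrw]
      omega
    · show ⌊y * (m:ℝ)^(i+1)⌋ - (m:ℤ) * ⌊y * (m:ℝ)^i⌋ < (m:ℤ)
      rw [hrw]
      omega
  set σ : ℕ → Fin m := fun i => ⟨(d i).toNat, by have := hkey i; omega⟩ with hσ
  have hσcast : ∀ i, ((σ i : ℕ) : ℝ) = ((d i : ℤ) : ℝ) := by
    intro i
    have h := (hkey i).1
    show (((d i).toNat : ℕ) : ℝ) = ((d i : ℤ) : ℝ)
    have h2 : ((d i).toNat : ℤ) = d i := Int.toNat_of_nonneg h
    exact_mod_cast congrArg (fun z : ℤ => (z : ℝ)) h2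
  have hfloor0 : ⌊y⌋ = 0 := Int.floor_eq_zero_iff.mpr (by exact hy)
  have hpartial : ∀ n, ∑ i ∈ range n, ((σ i : ℕ):ℝ)/(m:ℝ)^(i+1) = (⌊y * (m:ℝ)^n⌋:ℝ)/(m:ℝ)^n := by
    intro n
    induction n with
    | zero => simp [hfloor0]
    | succ n ih =>
      rw [Finset.sum_range_succ, ih, hσcast n]
      have hpn : ((m:ℝ)^n) ≠ 0 := by positivity
      have hpn1 : ((m:ℝ)^(n+1)) ≠ 0 := by positivity
      show _ + ((⌊y * (m:ℝ)^(n+1)⌋ - (m:ℤ) * ⌊y * (m:ℝ)^n⌋ : ℤ):ℝ)/(m:ℝ)^(n+1) = _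
      push_cast
      rw [pow_succ]
      field_simp
      ring
  have hub : ∀ n : ℕ, |∑ i ∈ range n, ((σ i : ℕ):ℝ)/(m:ℝ)^(i+1) - y| ≤ ((m:ℝ)⁻¹)^n := by
    intro n
    rw [hpartial n]
    have hp : (0:ℝ) < (m:ℝ)^n := by positivity
    have hinv : ((m:ℝ)⁻¹)^n = ((m:ℝ)^n)⁻¹ := by rw [inv_pow]
    rw [abs_le, hinv]
    constructor
    · have h1 : y * (m:ℝ)^n - 1 ≤ (⌊y * (m:ℝ)^n⌋:ℝ) := by
        linarith [Int.lt_floor_add_one (y * (m:ℝ)^n)]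
      have h2 : (y * (m:ℝ)^n - 1)/(m:ℝ)^n ≤ (⌊y * (m:ℝ)^n⌋:ℝ)/(m:ℝ)^n := by gcongr
      have h3 : (y * (m:ℝ)^n - 1)/(m:ℝ)^n = y - ((m:ℝ)^n)⁻¹ := by field_simp
      linarith
    · have h1 : (⌊y * (m:ℝ)^n⌋:ℝ) ≤ y * (m:ℝ)^n := Int.floor_le _
      have h2 : (⌊y * (m:ℝ)^n⌋:ℝ)/(m:ℝ)^n ≤ (y * (m:ℝ)^n)/(m:ℝ)^n := by gcongr
      have h3 : (y * (m:ℝ)^n)/(m:ℝ)^n = y := by field_simp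
      have h4 : (0:ℝ) ≤ ((m:ℝ)^n)⁻¹ := by positivity
      linarith
  have hgeo0 : Tendsto (fun n : ℕ => ((m:ℝ)⁻¹)^n) atTop (nhds 0) := by
    apply tendsto_pow_atTop_nhds_zero_of_lt_one (by positivity)
    rw [inv_eq_one_div, div_lt_one hm0]
    linarith
  have htend : Tendsto (fun n => ∑ i ∈ range n, ((σ i : ℕ):ℝ)/(m:ℝ)^(i+1))
      atTop (nhds y) := by
    have hlow : Tendsto (fun n : ℕ => y - ((m:ℝ)⁻¹)^n) atTop (nhds y) := by
      simpa using tendsto_const_nhds.sub hgeo0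
    have hhigh : Tendsto (fun n : ℕ => y + ((m:ℝ)⁻¹)^n) atTop (nhds y) := by
      simpa using tendsto_const_nhds.add hgeo0
    apply tendsto_of_tendsto_of_tendsto_of_le_of_le hlow hhigh
    · intro n
      have := abs_le.mp (hub n)
      linarith [this.1]
    · intro n
      have := abs_le.mp (hub n)
      linarith [this.2]
  exact ⟨σ, ((hasSum_iff_tendsto_nat_of_nonneg (fun i => by positivity) y).mpr htend).tsum_eq⟩


end VV
-- chunk 5
variable {α c : ℝ} {k : ℕ}

lemma m2 (hk : 10 ≤ k) : 2 ≤ 2^(k-3) := by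
  calc 2 = 2^1 := rfl
    _ ≤ 2^(k-3) := Nat.pow_le_pow_right (by norm_num) (by omega)

lemma Phi_injective (H : Setup α c k) : Function.Injective (Phi H) := by
  intro σ τ h
  by_contra hne
  have hex : ∃ n, σ n ≠ τ n := by
    by_contra hno
    push_neg at hno
    exact hne (funext hno)
  have hsep := Phi_sep H (fun j hj => not_not.mp (Nat.find_min hex hj)) (Nat.find_spec hex)
  rw [h, sub_self, abs_zero] at hsep
  exact absurd hsep (not_le.mpr (δ_pos H.hc0 _))

noncomputable def G (H : Setup α c k) : ℝ → ℝ :=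
  haveI : Nonempty (ℕ → Fin (2^(k-3))) := ⟨fun _ => ⟨0, Nat.two_pow_pos _⟩⟩
  fun x => Vmap (2^(k-3)) (Function.invFun (Phi H) x)

lemma G_Phi (H : Setup α c k) (σ : ℕ → Fin (2^(k-3))) :
    G H (Phi H σ) = Vmap (2^(k-3)) σ := by
  haveI : Nonempty (ℕ → Fin (2^(k-3))) := ⟨fun _ => ⟨0, Nat.two_pow_pos _⟩⟩
  show Vmap (2^(k-3)) (Function.invFun (Phi H) (Phi H σ)) = _
  rw [Function.leftInverse_invFun (Phi_injective H) σ]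

lemma holder_est (H : Setup α c k) {r : ℝ} (hr0 : 0 < r) (hr1 : r ≤ 1)
    (hmge : ((2:ℝ)^k)^r ≤ ((2^(k-3) : ℕ):ℝ)) (σ τ : ℕ → Fin (2^(k-3))) :
    |Vmap (2^(k-3)) σ - Vmap (2^(k-3)) τ| ≤
      (4*((2:ℝ)^k/(c/256))^r) * |Phi H σ - Phi H τ| ^ r := by
  have hc0 := H.hc0
  have hN0 : (0:ℝ) < (2:ℝ)^k := Npos
  have ha0 : (0:ℝ) < c/256 := by linarith
  have hCr0 : (0:ℝ) < 4*((2:ℝ)^k/(c/256))^r := by positivity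
  rcases eq_or_ne σ τ with rfl | hne
  · simp [Real.zero_rpow hr0.ne']
  · have hex : ∃ n, σ n ≠ τ n := by
      by_contra hno
      push_neg at hno
      exact hne (funext hno)
    set n := Nat.find hex with hn
    have hagree : ∀ j < n, σ j = τ j := fun j hj => not_not.mp (Nat.find_min hex hj)
    have hdist : δ c k (n+1) ≤ |Phi H σ - Phi H τ| := Phi_sep H hagree (Nat.find_spec hex)
    have hδ0 : (0:ℝ) < δ c k (n+1) := δ_pos hc0 _
    have hV : |Vmap (2^(k-3)) σ - Vmap (2^(k-3)) τ| ≤ 4 * (((2^(k-3):ℕ):ℝ)⁻¹)^n :=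
      Vmap_dist (m2 H.hk) σ τ n hagree
    have hm0 : (0:ℝ) < ((2^(k-3):ℕ):ℝ) := by positivity
    -- (m⁻¹)^n ≤ (N'^(r*n))⁻¹
    have hpow : ((2:ℝ)^k) ^ (r*(n:ℝ)) ≤ ((2^(k-3):ℕ):ℝ)^n := by
      have h1 : (((2:ℝ)^k)^r)^n ≤ ((2^(k-3):ℕ):ℝ)^n :=
        pow_le_pow_left₀ (Real.rpow_nonneg hN0.le r) hmge n
      calc ((2:ℝ)^k) ^ (r*(n:ℝ)) = (((2:ℝ)^k)^r)^((n:ℝ)) := Real.rpow_mul hN0.le r (n:ℝ)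
        _ = (((2:ℝ)^k)^r)^n := Real.rpow_natCast _ n
        _ ≤ _ := h1
    have hNrn0 : (0:ℝ) < ((2:ℝ)^k) ^ (r*(n:ℝ)) := Real.rpow_pos_of_pos hN0 _
    have h1 : 4 * (((2^(k-3):ℕ):ℝ)⁻¹)^n ≤ 4 * (((2:ℝ)^k) ^ (r*(n:ℝ)))⁻¹ := by
      have := inv_anti₀ hNrn0 hpow
      rw [inv_pow]
      linarith
    -- key algebraic identity
    have h2 : (4*((2:ℝ)^k/(c/256))^r) * (δ c k (n+1))^r = 4 * (((2:ℝ)^k) ^ (r*(n:ℝ)))⁻¹ := by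
      have hmul : ((2:ℝ)^k/(c/256)) * (δ c k (n+1)) = (((2:ℝ)^k)^n)⁻¹ := by
        unfold δ
        rw [pow_succ]
        field_simp
      have h3 : ((2:ℝ)^k/(c/256))^r * (δ c k (n+1))^r = ((((2:ℝ)^k)^n)⁻¹)^r := by
        rw [← Real.mul_rpow (by positivity) hδ0.le, hmul]
      have h4 : ((((2:ℝ)^k)^n)⁻¹)^r = (((2:ℝ)^k) ^ (r*(n:ℝ)))⁻¹ := by
        rw [← Real.rpow_natCast ((2:ℝ)^k) n, ← Real.rpow_neg hN0.le, ← Real.rpow_mul hN0.le,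
          show (-(n:ℝ))*r = -(r*(n:ℝ)) by ring, Real.rpow_neg hN0.le]
      rw [mul_assoc, h3, h4]
    have h3 : (4*((2:ℝ)^k/(c/256))^r) * (δ c k (n+1))^r
        ≤ (4*((2:ℝ)^k/(c/256))^r) * |Phi H σ - Phi H τ| ^ r := by
      apply mul_le_mul_of_nonneg_left _ hCr0.le
      exact Real.rpow_le_rpow hδ0.le hdist hr0.le
    linarith

-- chunk 6: dimension bound and conclusion
lemma dim_lower (H : Setup α c k) (r : ℝ≥0) (hr0 : 0 < r) (hr1 : (r:ℝ) ≤ 1)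
    (hmge : ((2:ℝ)^k)^(r:ℝ) ≤ ((2^(k-3) : ℕ):ℝ)) :
    (r : ℝ≥0∞) ≤ dimH (Set.range (Phi H)) := by
  have hc0 := H.hc0
  have hCr0 : (0:ℝ) < 4*((2:ℝ)^k/(c/256))^(r:ℝ) := by
    have hN0 : (0:ℝ) < (2:ℝ)^k := Npos
    positivity
  set Cr : ℝ≥0 := Real.toNNReal (4*((2:ℝ)^k/(c/256))^(r:ℝ)) with hCr
  have hol : HolderOnWith Cr r (G H) (Set.range (Phi H)) := by
    intro x hx y hy
    obtain ⟨σ, rfl⟩ := hx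
    obtain ⟨τ, rfl⟩ := hy
    rw [edist_dist, edist_dist]
    have hle : dist (G H (Phi H σ)) (G H (Phi H τ))
        ≤ (4*((2:ℝ)^k/(c/256))^(r:ℝ)) * dist (Phi H σ) (Phi H τ) ^ (r:ℝ) := by
      rw [G_Phi, G_Phi, Real.dist_eq, Real.dist_eq]
      exact holder_est H hr0 hr1 hmge σ τ
    calc ENNReal.ofReal (dist (G H (Phi H σ)) (G H (Phi H τ)))
        ≤ ENNReal.ofReal ((4*((2:ℝ)^k/(c/256))^(r:ℝ)) * dist (Phi H σ) (Phi H τ) ^ (r:ℝ)) :=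
          ENNReal.ofReal_le_ofReal hle
      _ = Cr * ENNReal.ofReal (dist (Phi H σ) (Phi H τ) ^ (r:ℝ)) := by
          rw [ENNReal.ofReal_mul hCr0.le]
          rfl
      _ = Cr * ENNReal.ofReal (dist (Phi H σ) (Phi H τ)) ^ (r:ℝ) := by
          rw [← ENNReal.ofReal_rpow_of_nonneg dist_nonneg r.coe_nonneg]
  have hsurj : Set.Ico (0:ℝ) 1 ⊆ G H '' (Set.range (Phi H)) := by
    intro y hy
    obtain ⟨σ, hσ⟩ := Vmap_surj (m2 H.hk) hy
    exact ⟨Phi H σ, Set.mem_range_self σ, by rw [G_Phi]; exact hσ⟩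
  have h1 : (1:ℝ≥0∞) = dimH (Set.Ico (0:ℝ) 1) := by
    rw [Real.dimH_of_nonempty_interior (by
      rw [interior_Ico]
      exact ⟨1/2, by norm_num⟩)]
    simp
  have h2 : dimH (Set.Ico (0:ℝ) 1) ≤ dimH (G H '' (Set.range (Phi H))) := dimH_mono hsurj
  have h3 : dimH (G H '' (Set.range (Phi H))) ≤ dimH (Set.range (Phi H)) / r :=
    hol.dimH_image_le hr0
  have h4 : (1:ℝ≥0∞) ≤ dimH (Set.range (Phi H)) / (r:ℝ≥0∞) :=
    le_trans (le_of_eq h1) (le_trans h2 h3)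
  rw [ENNReal.le_div_iff_mul_le (Or.inl (by exact_mod_cast hr0.ne'))
    (Or.inl ENNReal.coe_ne_top)] at h4
  simpa using h4

end Stmt1Aux

theorem stmt1 (α : ℝ) (hα : α ∈ Set.Ioo (0 : ℝ) 1) (hirr : Irrational α)
    (hba : BadlyApproximable α) :
    dimH {β : ℝ | β ∈ Set.Ioo (0 : ℝ) 1 ∧ BadApproxWrt α β} = 1 := by
  obtain ⟨hα0, hα1⟩ := hα
  obtain ⟨c, hc0, hc⟩ := hba
  have hc1 : c ≤ 1 := by
    have h := hc 0 1 one_ne_zero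
    simp only [Int.cast_one, Int.cast_zero, one_pow, div_one, zero_div, sub_zero] at h
    rw [abs_of_pos hα0] at h
    linarith
  have hba' : ∀ p q : ℤ, q ≠ 0 → c / |(q:ℝ)| ≤ |(q:ℝ)*α - (p:ℝ)| := by
    intro p q hq
    have h := hc p q hq
    have hq0 : ((q:ℝ)) ≠ 0 := Int.cast_ne_zero.mpr hq
    have habs : (0:ℝ) < |(q:ℝ)| := abs_pos.mpr hq0
    have hkey : |α - (p:ℝ)/(q:ℝ)| * |(q:ℝ)| = |(q:ℝ)*α - (p:ℝ)| := by
      rw [← abs_mul]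
      congr 1
      field_simp
    have hsq : ((q:ℝ))^2 = |(q:ℝ)|^2 := (sq_abs _).symm
    have h2 : c / |(q:ℝ)| = c / ((q:ℝ))^2 * |(q:ℝ)| := by
      rw [hsq]
      field_simp
    rw [h2, ← hkey]
    exact mul_le_mul_of_nonneg_right h habs.le
  apply le_antisymm
  · calc dimH {β : ℝ | β ∈ Set.Ioo (0 : ℝ) 1 ∧ BadApproxWrt α β}
        ≤ dimH (Set.univ : Set ℝ) := dimH_mono (Set.subset_univ _)
      _ = 1 := Real.dimH_univ
  · apply ENNReal.le_of_forall_nnreal_lt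
    intro r hr
    rcases eq_or_lt_of_le (show (0:ℝ≥0) ≤ r from zero_le) with hr0 | hr0
    · simp [← hr0]
    have hr1 : (r:ℝ) < 1 := by
      have : r < 1 := by exact_mod_cast hr
      exact_mod_cast this
    set k := max 10 (Nat.ceil ((3:ℝ)/(1 - (r:ℝ)))) with hk
    have hk10 : 10 ≤ k := le_max_left _ _
    have h1r : (0:ℝ) < 1 - (r:ℝ) := by linarith
    have hkr : (3:ℝ) ≤ (k:ℝ)*(1 - (r:ℝ)) := by
      have h1 : ((3:ℝ)/(1-(r:ℝ))) ≤ (k:ℝ) := by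
        refine le_trans (Nat.le_ceil _) ?_
        exact_mod_cast Nat.cast_le.mpr (le_max_right 10 (Nat.ceil ((3:ℝ)/(1 - (r:ℝ)))))
      rw [div_le_iff₀ h1r] at h1
      linarith
    have H : Stmt1Aux.Setup α c k := ⟨hc0, hc1, hk10, hba'⟩
    have hmge : ((2:ℝ)^k)^(r:ℝ) ≤ ((2^(k-3):ℕ):ℝ) := by
      have hkk : ((k - 3 : ℕ):ℝ) = (k:ℝ) - 3 := by
        have h3 : 3 ≤ k := by omega
        push_cast [Nat.cast_sub h3]
        ring
      have hL : ((2:ℝ)^k)^(r:ℝ) = (2:ℝ)^((k:ℝ)*(r:ℝ)) := by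
        rw [← Real.rpow_natCast (2:ℝ) k, ← Real.rpow_mul (by norm_num)]
      have hR : ((2^(k-3):ℕ):ℝ) = (2:ℝ)^((k:ℝ)-3) := by
        push_cast
        rw [← Real.rpow_natCast (2:ℝ) (k-3), hkk]
      rw [hL, hR]
      apply Real.rpow_le_rpow_of_exponent_le (by norm_num)
      nlinarith
    have hsub : Set.range (Stmt1Aux.Phi H) ⊆
        {β : ℝ | β ∈ Set.Ioo (0 : ℝ) 1 ∧ BadApproxWrt α β} := by
      rintro _ ⟨σ, rfl⟩
      refine ⟨Stmt1Aux.Phi_mem_Ioo H σ, Stmt1Aux.Cst c k, Stmt1Aux.Cst_pos hc0, ?_⟩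
      intro p q hq
      exact Stmt1Aux.Phi_badApprox H σ q p hq
    calc (r:ℝ≥0∞) ≤ dimH (Set.range (Stmt1Aux.Phi H)) :=
          Stmt1Aux.dim_lower H r hr0 hr1.le hmge
      _ ≤ _ := dimH_mono hsub
end

section
/- (Denjoy–Koksma inequality) Let α ∈ (0,1) be irrational with convergent denominators q_n, and let f : ℝ → ℝ be 1-periodic, of bounded variation on [0,1], with ∫₀¹ f(t) dt = 0. Then for every n ≥ 0 and every x ∈ ℝ, |Σ_{k=0}^{q_n − 1} f(x + kα)| ≤ V, where V is the total variation of f on [0,1]. -/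
open scoped BigOperators

/-- The Gauss map `G(x) = 1/x − ⌊1/x⌋`. -/
noncomputable def gaussMap (x : ℝ) : ℝ := 1 / x - ⌊1 / x⌋

/-- The continued fraction entries of `α ∈ (0,1)`: `a_n = ⌊1/Gⁿ(α)⌋`. -/
noncomputable def cfEntry (α : ℝ) (n : ℕ) : ℤ := ⌊1 / gaussMap^[n] α⌋

/-- The denominators of the convergents: `q₋₁ = 1`, `q₀ = a₀`,
`q_n = a_n·q_{n−1} + q_{n−2}`. -/
noncomputable def cfDen (α : ℝ) : ℕ → ℤ
  | 0 => cfEntry α 0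
  | 1 => cfEntry α 1 * cfEntry α 0 + 1
  | n + 2 => cfEntry α (n + 2) * cfDen α (n + 1) + cfDen α n


noncomputable def cfNum (α : ℝ) : ℕ → ℤ
  | 0 => 1
  | 1 => cfEntry α 1
  | n + 2 => cfEntry α (n + 2) * cfNum α (n + 1) + cfNum α n

namespace DK

open GenContFract Set

variable {α : ℝ}

lemma gauss_step (h1 : Irrational α) (h2 : α ∈ Set.Ioo (0:ℝ) 1) :
    Irrational (gaussMap α) ∧ gaussMap α ∈ Set.Ioo (0:ℝ) 1 := by
  have hinv : Irrational α⁻¹ := h1.inv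
  have hg : gaussMap α = Int.fract α⁻¹ := by
    rw [gaussMap, one_div]; rfl
  have hirr : Irrational (gaussMap α) := by
    rw [hg]; exact hinv.sub_intCast _
  refine ⟨hirr, ?_, ?_⟩
  · rcases lt_or_eq_of_le (Int.fract_nonneg α⁻¹) with h | h
    · rwa [hg]
    · exact absurd (hg ▸ h.symm : gaussMap α = 0) (by simpa using hirr.ne_int 0)
  · rw [hg]; exact Int.fract_lt_one _

lemma gauss_iter (h1 : Irrational α) (h2 : α ∈ Set.Ioo (0:ℝ) 1) (n : ℕ) :
    Irrational (gaussMap^[n] α) ∧ gaussMap^[n] α ∈ Set.Ioo (0:ℝ) 1 := by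
  induction n with
  | zero => exact ⟨h1, h2⟩
  | succ n ih =>
    rw [Function.iterate_succ_apply']
    exact gauss_step ih.1 ih.2

lemma gauss_eq_fract (y : ℝ) : gaussMap y = Int.fract y⁻¹ := by
  rw [gaussMap, one_div]; rfl

lemma cfEntry_eq (α : ℝ) (n : ℕ) : cfEntry α n = ⌊(gaussMap^[n] α)⁻¹⌋ := by
  rw [cfEntry, one_div]

lemma stream_eq (h1 : Irrational α) (h2 : α ∈ Set.Ioo (0:ℝ) 1) (n : ℕ) :
    IntFractPair.stream α (n + 1) = some ⟨cfEntry α n, gaussMap^[n+1] α⟩ := by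
  induction n with
  | zero =>
    have h0 : IntFractPair.stream α 0 = some ⟨⌊α⌋, Int.fract α⟩ :=
      IntFractPair.stream_zero α
    have hfr : Int.fract α = α := Int.fract_eq_self.2 ⟨le_of_lt h2.1, h2.2⟩
    have hne : (⟨⌊α⌋, Int.fract α⟩ : IntFractPair ℝ).fr ≠ 0 := by
      simp [hfr]; exact ne_of_gt h2.1
    have := IntFractPair.stream_succ_of_some h0 hne
    rw [this]
    have e1 : ⌊({ b := ⌊α⌋, fr := Int.fract α } : IntFractPair ℝ).fr⁻¹⌋ = cfEntry α 0 := by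
      rw [cfEntry_eq]; simp [hfr]
    have e2 : Int.fract ({ b := ⌊α⌋, fr := Int.fract α } : IntFractPair ℝ).fr⁻¹
        = gaussMap^[0+1] α := by
      simp only [hfr, zero_add, Function.iterate_one, gauss_eq_fract]
    rw [IntFractPair.of, e1, e2]
  | succ n ih =>
    have hiter := gauss_iter h1 h2 (n+1)
    have hne : (⟨cfEntry α n, gaussMap^[n+1] α⟩ : IntFractPair ℝ).fr ≠ 0 := by
      simpa using (hiter.1.ne_int 0)
    have := IntFractPair.stream_succ_of_some ih hne
    rw [this]
    have e1 : ⌊({ b := cfEntry α n, fr := gaussMap^[n+1] α } : IntFractPair ℝ).fr⁻¹⌋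
        = cfEntry α (n+1) := by
      rw [cfEntry_eq α (n+1), Function.iterate_succ_apply']
    have e2 : Int.fract ({ b := cfEntry α n, fr := gaussMap^[n+1] α } : IntFractPair ℝ).fr⁻¹
        = gaussMap^[n+1+1] α := by
      rw [Function.iterate_succ_apply' gaussMap (n+1), gauss_eq_fract]
    rw [IntFractPair.of, e1, e2]

lemma not_term (h1 : Irrational α) (h2 : α ∈ Set.Ioo (0:ℝ) 1) (n : ℕ) :
    ¬(GenContFract.of α).TerminatedAt n := by
  rw [of_terminatedAt_n_iff_succ_nth_intFractPair_stream_eq_none, stream_eq h1 h2 n]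
  simp

lemma s_get (h1 : Irrational α) (h2 : α ∈ Set.Ioo (0:ℝ) 1) (n : ℕ) :
    (GenContFract.of α).s.get? n = some ⟨1, (cfEntry α n : ℝ)⟩ :=
  get?_of_eq_some_of_succ_get?_intFractPair_stream (stream_eq h1 h2 n)

lemma of_h_eq (h2 : α ∈ Set.Ioo (0:ℝ) 1) : (GenContFract.of α).h = 0 := by
  rw [of_h_eq_floor]
  exact_mod_cast Int.floor_eq_zero_iff.2 ⟨le_of_lt h2.1, h2.2⟩

lemma dens_eq (h1 : Irrational α) (h2 : α ∈ Set.Ioo (0:ℝ) 1) :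
    ∀ n : ℕ, (GenContFract.of α).dens (n+1) = ((cfDen α n : ℤ) : ℝ) := by
  have hd0 : (GenContFract.of α).dens 0 = 1 := zeroth_den_eq_one
  have hd1 : (GenContFract.of α).dens 1 = (cfEntry α 0 : ℝ) := by
    rw [first_den_eq (s_get h1 h2 0)]
  intro n
  induction n using Nat.strong_induction_on with
  | _ n ih =>
    match n with
    | 0 => simpa [cfDen] using hd1
    | 1 =>
      have := dens_recurrence (g := GenContFract.of α) (n := 0) (s_get h1 h2 1) hd0 hd1
      rw [this]
      show (cfEntry α 1 : ℝ) * (cfEntry α 0 : ℝ) + 1 * 1 = ((cfDen α 1 : ℤ) : ℝ)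
      rw [show cfDen α 1 = cfEntry α 1 * cfEntry α 0 + 1 from rfl]
      push_cast; ring
    | (m + 2) =>
      have h1' := ih (m+1) (by omega)
      have h0' := ih m (by omega)
      have := dens_recurrence (g := GenContFract.of α) (n := m + 1) (s_get h1 h2 (m+2)) h0' h1'
      rw [this]
      show (cfEntry α (m+2) : ℝ) * ((cfDen α (m+1) : ℤ) : ℝ) + 1 * ((cfDen α m : ℤ) : ℝ)
          = ((cfDen α (m+2) : ℤ) : ℝ)
      rw [show cfDen α (m+2) = cfEntry α (m+2) * cfDen α (m+1) + cfDen α m from rfl]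
      push_cast; ring

lemma nums_eq (h1 : Irrational α) (h2 : α ∈ Set.Ioo (0:ℝ) 1) :
    ∀ n : ℕ, (GenContFract.of α).nums (n+1) = ((cfNum α n : ℤ) : ℝ) := by
  have hd0 : (GenContFract.of α).nums 0 = 0 := by
    rw [zeroth_num_eq_h, of_h_eq h2]
  have hd1 : (GenContFract.of α).nums 1 = 1 := by
    rw [first_num_eq (s_get h1 h2 0), of_h_eq h2]; ring
  intro n
  induction n using Nat.strong_induction_on with
  | _ n ih =>
    match n with
    | 0 => simpa [cfNum] using hd1
    | 1 =>
      have := nums_recurrence (g := GenContFract.of α) (n := 0) (s_get h1 h2 1) hd0 hd1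
      rw [this]
      show (cfEntry α 1 : ℝ) * 1 + 1 * 0 = ((cfNum α 1 : ℤ) : ℝ)
      rw [show cfNum α 1 = cfEntry α 1 from rfl]
      push_cast; ring
    | (m + 2) =>
      have h1' := ih (m+1) (by omega)
      have h0' := ih m (by omega)
      have := nums_recurrence (g := GenContFract.of α) (n := m + 1) (s_get h1 h2 (m+2)) h0' h1'
      rw [this]
      show (cfEntry α (m+2) : ℝ) * ((cfNum α (m+1) : ℤ) : ℝ) + 1 * ((cfNum α m : ℤ) : ℝ)
          = ((cfNum α (m+2) : ℤ) : ℝ)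
      rw [show cfNum α (m+2) = cfEntry α (m+2) * cfNum α (m+1) + cfNum α m from rfl]
      push_cast; ring

lemma cfEntry_pos (h1 : Irrational α) (h2 : α ∈ Set.Ioo (0:ℝ) 1) (n : ℕ) :
    1 ≤ cfEntry α n := by
  have h := gauss_iter h1 h2 n
  have : (1:ℝ) ≤ 1 / gaussMap^[n] α := by
    rw [le_div_iff₀ h.2.1]; simpa using le_of_lt h.2.2
  exact Int.le_floor.2 (by exact_mod_cast this)

lemma cfDen_pos (h1 : Irrational α) (h2 : α ∈ Set.Ioo (0:ℝ) 1) : ∀ n, 1 ≤ cfDen α n := by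
  intro n
  induction n using Nat.strong_induction_on with
  | _ n ih =>
    match n with
    | 0 => exact cfEntry_pos h1 h2 0
    | 1 =>
      have := cfEntry_pos h1 h2 0
      have := cfEntry_pos h1 h2 1
      show 1 ≤ cfEntry α 1 * cfEntry α 0 + 1
      nlinarith
    | (m+2) =>
      have ha := cfEntry_pos h1 h2 (m+2)
      have hb := ih (m+1) (by omega)
      have hc := ih m (by omega)
      show 1 ≤ cfEntry α (m+2) * cfDen α (m+1) + cfDen α m
      nlinarith

lemma cfDen_mono (h1 : Irrational α) (h2 : α ∈ Set.Ioo (0:ℝ) 1) (n : ℕ) :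
    cfDen α n ≤ cfDen α (n+1) := by
  match n with
  | 0 =>
    have := cfEntry_pos h1 h2 0
    have := cfEntry_pos h1 h2 1
    show cfEntry α 0 ≤ cfEntry α 1 * cfEntry α 0 + 1
    nlinarith
  | (m+1) =>
    have ha := cfEntry_pos h1 h2 (m+2)
    have hb := cfDen_pos h1 h2 (m+1)
    have hc := cfDen_pos h1 h2 m
    show cfDen α (m+1) ≤ cfEntry α (m+2) * cfDen α (m+1) + cfDen α m
    nlinarith

lemma approx (h1 : Irrational α) (h2 : α ∈ Set.Ioo (0:ℝ) 1) (n : ℕ) :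
    |α - (cfNum α n : ℝ) / (cfDen α n : ℝ)| ≤ 1 / ((cfDen α n : ℝ))^2 := by
  have key := abs_sub_convs_le (v := α) (n := n+1) (not_term h1 h2 (n+1))
  rw [conv_eq_num_div_den, nums_eq h1 h2 n, dens_eq h1 h2 n, dens_eq h1 h2 (n+1)] at key
  refine key.trans ?_
  have hq : (1:ℝ) ≤ (cfDen α n : ℝ) := by exact_mod_cast cfDen_pos h1 h2 n
  have hq' : (cfDen α n : ℝ) ≤ (cfDen α (n+1) : ℝ) := by exact_mod_cast cfDen_mono h1 h2 n
  have h0 : (0:ℝ) < (cfDen α n : ℝ) := by linarith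
  have h0' : (0:ℝ) < (cfDen α (n+1) : ℝ) := lt_of_lt_of_le h0 hq'
  rw [div_le_div_iff₀ (mul_pos h0 h0') (pow_pos h0 2)]
  nlinarith

lemma coprime (h1 : Irrational α) (h2 : α ∈ Set.Ioo (0:ℝ) 1) (n : ℕ) :
    Int.gcd (cfNum α n) (cfDen α n) = 1 := by
  have hdet := SimpContFract.determinant (K := ℝ) (s := SimpContFract.of α) (n := n+1)
    (not_term h1 h2 (n+1))
  have hcoe : (↑(SimpContFract.of α) : GenContFract ℝ) = GenContFract.of α := rfl
  rw [hcoe, nums_eq h1 h2 n, dens_eq h1 h2 n, nums_eq h1 h2 (n+1), dens_eq h1 h2 (n+1)] at hdet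
  have hint : (cfNum α n) * (cfDen α (n+1)) - (cfDen α n) * (cfNum α (n+1)) = (-1)^(n+2) := by
    have : (((cfNum α n) * (cfDen α (n+1)) - (cfDen α n) * (cfNum α (n+1)) : ℤ) : ℝ)
        = (((-1)^(n+2) : ℤ) : ℝ) := by push_cast; push_cast at hdet; linarith
    exact_mod_cast this
  have hdvd : (Int.gcd (cfNum α n) (cfDen α n) : ℤ) ∣ (-1)^(n+2) := by
    rw [← hint]
    exact dvd_sub ((Int.gcd_dvd_left _ _).mul_right _) ((Int.gcd_dvd_right _ _).mul_right _)
  have := Int.isUnit_iff.1 (isUnit_of_dvd_unit hdvd ((isUnit_one.neg).pow _))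
  omega

end DK

namespace DK2

open Set

-- sum over an injective self-map of range Q
lemma sum_comp_inj {Q : ℕ} (j : ℕ → ℕ) (hj : ∀ k < Q, j k < Q)
    (hinj : ∀ k < Q, ∀ k' < Q, j k = j k' → k = k') (F : ℕ → ℝ) :
    ∑ k ∈ Finset.range Q, F (j k) = ∑ k ∈ Finset.range Q, F k := by
  have hinj' : Set.InjOn j (Finset.range Q) := by
    intro a ha b hb hab
    exact hinj a (Finset.mem_range.1 ha) b (Finset.mem_range.1 hb) hab
  have himg : (Finset.range Q).image j = Finset.range Q := by
    apply Finset.eq_of_subset_of_card_le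
    · intro y hy
      rcases Finset.mem_image.1 hy with ⟨k, hk, rfl⟩
      exact Finset.mem_range.2 (hj k (Finset.mem_range.1 hk))
    · rw [Finset.card_image_of_injOn hinj']
  conv_rhs => rw [← himg]
  rw [Finset.sum_image (fun a ha b hb hab => hinj' ha hb hab)]

lemma term_bound {g : ℝ → ℝ} {a b r : ℝ} (hab : a < b) (hr : r ∈ Set.Icc a b)
    (hint : IntervalIntegrable g MeasureTheory.volume a b)
    (hbv : BoundedVariationOn g (Set.Icc a b)) :
    |g r * (b - a) - ∫ t in a..b, g t| ≤ (eVariationOn g (Set.Icc a b)).toReal * (b - a) := by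
  have h1 : (∫ t in a..b, (g r - g t)) = g r * (b - a) - ∫ t in a..b, g t := by
    rw [intervalIntegral.integral_sub intervalIntegrable_const hint,
      intervalIntegral.integral_const]
    simp [smul_eq_mul, mul_comm]
  rw [← h1]
  have hb : ∀ t ∈ Set.uIoc a b, ‖g r - g t‖ ≤ (eVariationOn g (Set.Icc a b)).toReal := by
    intro t ht
    have ht' : t ∈ Set.Icc a b := by
      rw [Set.uIoc_of_le hab.le] at ht
      exact ⟨ht.1.le, ht.2⟩
    rw [Real.norm_eq_abs, abs_sub_le_iff]
    exact ⟨hbv.sub_le hr ht', hbv.sub_le ht' hr⟩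
  have := intervalIntegral.norm_integral_le_of_norm_le_const hb
  rw [Real.norm_eq_abs] at this
  calc |∫ t in a..b, (g r - g t)| ≤ _ * |b - a| := this
    _ = _ * (b - a) := by rw [abs_of_pos (sub_pos.2 hab)]

variable {f : ℝ → ℝ}

lemma perZ (hper : ∀ x, f (x + 1) = f x) : ∀ (x : ℝ) (m : ℤ), f (x + m) = f x := by
  intro x m
  have hp : Function.Periodic f 1 := hper
  simpa using (hp.int_mul m) x

lemma var_translate (f : ℝ → ℝ) (c a b : ℝ) :
    eVariationOn (fun t => f (t + c)) (Set.Icc a b) = eVariationOn f (Set.Icc (a + c) (b + c)) := by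
  have hmono : MonotoneOn (fun t => t + c) (Set.Icc a b) := fun u _ v _ huv => by
    simpa using huv
  have h := eVariationOn.comp_eq_of_monotoneOn f (fun t => t + c) hmono
  rw [show (fun t => f (t + c)) = f ∘ (fun t => t + c) from rfl, h, Set.image_add_const_Icc]

lemma var_window (hper : ∀ x, f (x + 1) = f x) (x : ℝ) :
    eVariationOn f (Set.Icc x (x + 1)) = eVariationOn f (Set.Icc 0 1) := by
  have hZ := perZ hper
  set m : ℤ := ⌊x⌋ with hm
  set c : ℝ := x - m with hc
  have hc0 : 0 ≤ c := by
    simp only [hc, hm, sub_nonneg]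
    exact Int.floor_le x
  have hc1 : c ≤ 1 := by
    have := Int.lt_floor_add_one x
    simp only [hc, hm]
    linarith
  -- translate by m
  have h1 : eVariationOn f (Set.Icc x (x + 1)) = eVariationOn f (Set.Icc c (c + 1)) := by
    have : eVariationOn (fun t => f (t + (m : ℝ))) (Set.Icc c (c + 1))
        = eVariationOn f (Set.Icc (c + m) (c + 1 + m)) := var_translate f m c (c + 1)
    have hfun : (fun t => f (t + (m : ℝ))) = f := funext fun t => hZ t m
    rw [hfun] at this
    rw [show x = c + (m:ℝ) by rw [hc]; ring, show c + (m:ℝ) + 1 = c + 1 + m by ring, ← this]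
  -- split and reassemble
  have h2 : eVariationOn f (Set.Icc 1 (c + 1)) = eVariationOn f (Set.Icc 0 c) := by
    have : eVariationOn (fun t => f (t + (1:ℝ))) (Set.Icc 0 c)
        = eVariationOn f (Set.Icc (0 + 1) (c + 1)) := var_translate f 1 0 c
    have hfun : (fun t => f (t + (1:ℝ))) = f := funext fun t => hper t
    rw [hfun, zero_add] at this
    exact this.symm
  have key := eVariationOn.Icc_add_Icc f (s := Set.univ) hc1 (by linarith : (1:ℝ) ≤ c + 1)
    (Set.mem_univ 1)
  have key2 := eVariationOn.Icc_add_Icc f (s := Set.univ) hc0 hc1 (Set.mem_univ c)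
  simp only [Set.univ_inter] at key key2
  rw [h1, ← key, h2, ← key2]
  ring

lemma f_intervalIntegrable (hper : ∀ x, f (x + 1) = f x)
    (hbv : BoundedVariationOn f (Set.Icc 0 1)) :
    ∀ a b : ℝ, IntervalIntegrable f MeasureTheory.volume a b := by
  have hZ := perZ hper
  obtain ⟨p, q, hp, hq, hpq⟩ :=
    hbv.locallyBoundedVariationOn.exists_monotoneOn_sub_monotoneOn
  have h01 : IntervalIntegrable f MeasureTheory.volume 0 1 := by
    have hu : Set.uIcc (0:ℝ) 1 = Set.Icc 0 1 := Set.uIcc_of_le zero_le_one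
    have hip : IntervalIntegrable p MeasureTheory.volume 0 1 :=
      (hu ▸ hp : MonotoneOn p (Set.uIcc 0 1)).intervalIntegrable
    have hiq : IntervalIntegrable q MeasureTheory.volume 0 1 :=
      (hu ▸ hq : MonotoneOn q (Set.uIcc 0 1)).intervalIntegrable
    rw [hpq]
    exact hip.sub hiq
  have hint : ∀ m : ℤ, IntervalIntegrable f MeasureTheory.volume m (m + 1) := by
    intro m
    have := h01.comp_add_right (-(m : ℝ))
    have hfun : (fun x => f (x + -(m:ℝ))) = f := by
      funext t
      simpa using (hZ (t + -(m:ℝ)) m).symm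
    rw [hfun] at this
    simpa [add_comm] using this
  have hseg : ∀ (m : ℤ) (k : ℕ), IntervalIntegrable f MeasureTheory.volume m (m + k) := by
    intro m k
    induction k with
    | zero => simp [IntervalIntegrable.refl]
    | succ k ih =>
      have : IntervalIntegrable f MeasureTheory.volume (m + k) (m + k + 1) := by
        have := hint (m + k)
        simpa [add_assoc] using this
      have := ih.trans this
      simpa [add_assoc] using this
  have main : ∀ a b : ℝ, a ≤ b → IntervalIntegrable f MeasureTheory.volume a b := by
    intro a b hab
    set m : ℤ := ⌊a⌋ with hm
    set k : ℕ := (⌈b⌉ - ⌊a⌋).toNat with hk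
    have hcb : (⌊a⌋ : ℝ) ≤ ⌈b⌉ := by
      have h1 := Int.floor_le a
      have h2 := Int.le_ceil b
      exact_mod_cast le_trans h1 (le_trans hab h2)
    have hkk : (k : ℤ) = ⌈b⌉ - ⌊a⌋ := Int.toNat_of_nonneg (by exact_mod_cast sub_nonneg.2 hcb)
    refine (hseg m k).mono_set ?_
    rw [Set.uIcc_of_le hab, Set.uIcc_of_le]
    · apply Set.Icc_subset_Icc
      · exact Int.floor_le a
      · have : ((m : ℝ) + k) = (⌈b⌉ : ℝ) := by
          have : ((m + k : ℤ) : ℝ) = ((⌈b⌉ : ℤ) : ℝ) := by rw [hkk]; push_cast; ring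
          push_cast at this ⊢; linarith
        rw [this]
        exact Int.le_ceil b
    · have : (0:ℝ) ≤ k := Nat.cast_nonneg k
      linarith
  intro a b
  rcases le_total a b with hab | hab
  · exact main a b hab
  · exact (main b a hab).symm

end DK2

namespace DK2
open Set

lemma var_partition (g : ℝ → ℝ) (Q : ℕ) (hQ : 0 < Q) :
    ∑ j ∈ Finset.range Q,
        eVariationOn g (Set.Icc ((j : ℝ)/(Q : ℝ)) (((j : ℝ) + 1)/(Q : ℝ)))
      = eVariationOn g (Set.Icc 0 1) := by
  have hQr : (0:ℝ) < (Q:ℝ) := Nat.cast_pos.2 hQ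
  have key : ∀ m : ℕ, m ≤ Q →
      ∑ j ∈ Finset.range m,
          eVariationOn g (Set.Icc ((j : ℝ)/(Q : ℝ)) (((j : ℝ) + 1)/(Q : ℝ)))
        = eVariationOn g (Set.Icc 0 ((m : ℝ)/(Q : ℝ))) := by
    intro m hm
    induction m with
    | zero =>
      simp only [Finset.range_zero, Finset.sum_empty, Nat.cast_zero, zero_div]
      exact (eVariationOn.subsingleton g (by rw [Set.Icc_self]; exact Set.subsingleton_singleton)).symm
    | succ m ih =>
      rw [Finset.sum_range_succ, ih (by omega)]
      have h1 : (0:ℝ) ≤ (m:ℝ)/(Q:ℝ) := by positivity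
      have h2 : (m:ℝ)/(Q:ℝ) ≤ ((m:ℝ)+1)/(Q:ℝ) := by
        gcongr
        linarith
      have key := eVariationOn.Icc_add_Icc g (s := Set.univ) h1 h2 (Set.mem_univ _)
      simp only [Set.univ_inter] at key
      rw [key]
      congr 2
      push_cast; ring
  have := key Q le_rfl
  rw [div_self (ne_of_gt hQr)] at this
  exact this

end DK2

lemma DK2.main (α x : ℝ) (f : ℝ → ℝ) (hper : ∀ x, f (x + 1) = f x)
    (hbv : BoundedVariationOn f (Set.Icc 0 1))
    (hmean : ∫ t in (0 : ℝ)..1, f t = 0)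
    (q p : ℤ) (hq1 : 1 ≤ q) (hgcd : Int.gcd p q = 1)
    (happrox0 : |α - (p : ℝ) / (q : ℝ)| ≤ 1 / ((q : ℝ)) ^ 2) :
    |∑ k ∈ Finset.range q.toNat, f (x + (k : ℝ) * α)| ≤
      (eVariationOn f (Set.Icc 0 1)).toReal := by
  set Q : ℕ := q.toNat with hQdef
  have hQpos : 0 < Q := by omega
  have hQq : (Q : ℤ) = q := Int.toNat_of_nonneg (by omega)
  set Qr : ℝ := (q : ℝ) with hQrdef
  have hQrpos : 0 < Qr := by rw [hQrdef]; exact_mod_cast (by omega : (0:ℤ) < q)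
  have hQr1 : 1 ≤ Qr := by rw [hQrdef]; exact_mod_cast hq1
  have hQrQ : ((Q : ℕ) : ℝ) = Qr := by rw [hQrdef]; exact_mod_cast congrArg Int.cast hQq
  have hq0 : Qr ≠ 0 := ne_of_gt hQrpos
  set θ : ℝ := α - (p : ℝ) / Qr with hθdef
  have happrox : |θ| ≤ 1 / Qr ^ 2 := happrox0
  -- the combinatorial map
  set mm : ℕ → ℕ := fun k => ((k * p) % q).toNat with hmmdef
  have hmmlt : ∀ k, mm k < Q := by
    intro k
    have h1 : 0 ≤ ((k : ℤ) * p) % q := Int.emod_nonneg _ (by omega)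
    have h2 : ((k : ℤ) * p) % q < q := Int.emod_lt_of_pos _ (by omega)
    simp only [hmmdef, hQdef]
    omega
  have hmminj : ∀ k < Q, ∀ k' < Q, mm k = mm k' → k = k' := by
    intro k hk k' hk' he
    have h1 : 0 ≤ ((k : ℤ) * p) % q := Int.emod_nonneg _ (by omega)
    have h1' : 0 ≤ ((k' : ℤ) * p) % q := Int.emod_nonneg _ (by omega)
    have he' : ((k : ℤ) * p) % q = ((k' : ℤ) * p) % q := by
      simp only [hmmdef] at he
      omega
    have hmodeq : (k : ℤ) * p ≡ (k' : ℤ) * p [ZMOD q] := he'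
    have hdvd : q ∣ ((k' : ℤ) - k) * p := by
      have := hmodeq.dvd
      have hrw : ((k' : ℤ) - k) * p = (k' : ℤ) * p - (k : ℤ) * p := by ring
      rw [hrw]
      exact this
    have hcop : IsCoprime (q : ℤ) p := by
      rw [Int.isCoprime_iff_gcd_eq_one, Int.gcd_comm]
      exact hgcd
    have hdvd2 : q ∣ ((k' : ℤ) - k) := hcop.dvd_of_dvd_mul_right hdvd
    obtain ⟨c, hc⟩ := hdvd2
    have hkQ : (k : ℤ) < Q := by exact_mod_cast hk
    have hkQ' : (k' : ℤ) < Q := by exact_mod_cast hk'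
    have hc0 : c = 0 := by
      by_contra hne
      rcases lt_or_gt_of_ne hne with h | h
      · have hcc : q * c ≤ q * (-1) := mul_le_mul_of_nonneg_left (by omega) (by omega)
        omega
      · have hcc : q * 1 ≤ q * c := mul_le_mul_of_nonneg_left (by omega) (by omega)
        omega
    rw [hc0, mul_zero] at hc
    have : (k' : ℤ) = k := by omega
    exact_mod_cast this.symm
  -- arithmetic identity
  have hr_eq : ∀ k : ℕ, (k : ℝ) * α = ((mm k : ℝ) / Qr + (k : ℝ) * θ) + (((k * p) / q : ℤ) : ℝ) := by
    intro k
    have h1 : 0 ≤ ((k : ℤ) * p) % q := Int.emod_nonneg _ (by omega)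
    have hdm : q * (((k : ℤ) * p) / q) + ((k : ℤ) * p) % q = (k : ℤ) * p := Int.mul_ediv_add_emod _ _
    have hmmr : ((mm k : ℕ) : ℝ) = ((((k : ℤ) * p) % q : ℤ) : ℝ) := by
      simp only [hmmdef]
      exact_mod_cast congrArg Int.cast (Int.toNat_of_nonneg h1)
    have hcast : Qr * ((((k : ℤ) * p) / q : ℤ) : ℝ) + ((((k : ℤ) * p) % q : ℤ) : ℝ)
        = (k : ℝ) * (p : ℝ) := by
      rw [hQrdef]
      exact_mod_cast congrArg (Int.cast : ℤ → ℝ) hdm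
    rw [hθdef, hmmr]
    have hkp : (((k : ℕ) * p : ℤ) : ℝ) = (k : ℝ) * (p : ℝ)  := by push_cast; ring
    field_simp
    nlinarith [hcast]
  -- bound on k * θ
  have hkθ : ∀ k < Q, |(k : ℝ) * θ| ≤ 1 / Qr := by
    intro k hk
    have hkle : (k : ℝ) ≤ Qr - 1 := by
      have h1 : (k : ℤ) + 1 ≤ q := by omega
      have h2 : ((k : ℤ) : ℝ) + 1 ≤ (q : ℝ) := by exact_mod_cast h1
      rw [hQrdef]
      push_cast at h2 ⊢
      linarith
    rw [abs_mul, Nat.abs_cast]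
    have h1 : (k : ℝ) * |θ| ≤ (Qr - 1) * (1 / Qr ^ 2) :=
      mul_le_mul hkle happrox (abs_nonneg _) (by linarith)
    have h2 : (Qr - 1) * (1 / Qr ^ 2) ≤ 1 / Qr := by
      rw [mul_one_div, div_le_div_iff₀ (by positivity) hQrpos]
      nlinarith
    linarith
  -- existence of the reindexing
  clear_value Q Qr θ mm
  obtain ⟨jj, r', hjlt, hjinj, hmem, hz⟩ :
      ∃ (jj : ℕ → ℕ) (r' : ℕ → ℝ),
        (∀ k < Q, jj k < Q) ∧ (∀ k < Q, ∀ k' < Q, jj k = jj k' → k = k') ∧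
        (∀ k < Q, r' k ∈ Set.Icc ((jj k : ℝ) / Qr) (((jj k : ℝ) + 1) / Qr)) ∧
        (∀ k < Q, ∃ z : ℤ, (k : ℝ) * α = r' k + z) := by
    rcases le_or_gt 0 θ with hθ0 | hθ0
    · refine ⟨mm, fun k => (mm k : ℝ) / Qr + (k : ℝ) * θ, fun k _ => hmmlt k, hmminj, ?_, ?_⟩
      · intro k hk
        dsimp only
        rw [Set.mem_Icc]
        have h0 : 0 ≤ (k : ℝ) * θ := mul_nonneg (Nat.cast_nonneg _) hθ0
        have h1 : (k : ℝ) * θ ≤ 1 / Qr := (le_abs_self _).trans (hkθ k hk)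
        rw [add_div]
        constructor <;> linarith
      · intro k hk
        exact ⟨((k : ℤ) * p) / q, by dsimp only; rw [hr_eq k]⟩
    · refine ⟨fun k => if mm k = 0 then Q - 1 else mm k - 1,
        fun k => if mm k = 0 then (mm k : ℝ) / Qr + (k : ℝ) * θ + 1
          else (mm k : ℝ) / Qr + (k : ℝ) * θ, ?_, ?_, ?_, ?_⟩
      · intro k hk
        have := hmmlt k
        by_cases h : mm k = 0 <;> simp only [h, if_true, if_false] <;> omega
      · intro k hk k' hk' he
        have h1 := hmmlt k
        have h2 := hmmlt k'
        apply hmminj k hk k' hk'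
        by_cases ha : mm k = 0 <;> by_cases hb : mm k' = 0 <;>
          simp only [ha, hb, if_true, if_false] at he <;> omega
      · intro k hk
        have hub : (k : ℝ) * θ ≤ 0 :=
          mul_nonpos_of_nonneg_of_nonpos (Nat.cast_nonneg _) hθ0.le
        have hlb : -(1 / Qr) ≤ (k : ℝ) * θ := by
          have h1 := hkθ k hk
          have h2 := neg_abs_le ((k : ℝ) * θ)
          linarith
        have h1Qr : 0 < 1 / Qr := by positivity
        dsimp only
        by_cases h : mm k = 0
        · rw [if_pos h, if_pos h, h]
          simp only [Nat.cast_zero, zero_div, zero_add]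
          have hQ1r : ((Q - 1 : ℕ) : ℝ) = Qr - 1 := by
            have h1 : ((Q - 1 : ℕ) : ℤ) = q - 1 := by omega
            have h2 := congrArg (Int.cast : ℤ → ℝ) h1
            push_cast at h2
            rw [h2, hQrdef]
          rw [hQ1r, Set.mem_Icc]
          have e1 : (Qr - 1) / Qr = 1 - 1 / Qr := by
            rw [sub_div, div_self hq0]
          have e2 : (Qr - 1 + 1) / Qr = 1 := by
            rw [sub_add_cancel, div_self hq0]
          rw [e1, e2]
          constructor <;> linarith
        · rw [if_neg h, if_neg h]
          have hmm1 : 1 ≤ mm k := by omega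
          have hmmc : ((mm k - 1 : ℕ) : ℝ) = (mm k : ℝ) - 1 := by
            have : ((mm k - 1 : ℕ) : ℤ) = (mm k : ℤ) - 1 := by omega
            exact_mod_cast this
          rw [hmmc, Set.mem_Icc]
          have e1 : ((mm k : ℝ) - 1) / Qr = (mm k : ℝ) / Qr - 1 / Qr := by ring
          have e2 : ((mm k : ℝ) - 1 + 1) / Qr = (mm k : ℝ) / Qr := by ring_nf
          rw [e1, e2]
          constructor <;> linarith
      · intro k hk
        dsimp only
        by_cases h : mm k = 0
        · refine ⟨((k : ℤ) * p) / q - 1, ?_⟩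
          rw [if_pos h, hr_eq k]
          push_cast
          ring
        · refine ⟨((k : ℤ) * p) / q, ?_⟩
          rw [if_neg h, hr_eq k]
  -- downstream
  set g : ℝ → ℝ := fun t => f (t + x) with hgdef
  have hgper : ∀ t, g (t + 1) = g t := by
    intro t
    show f (t + 1 + x) = f (t + x)
    rw [show t + 1 + x = (t + x) + 1 by ring, hper]
  have hgZ : ∀ (t : ℝ) (m : ℤ), g (t + m) = g t := DK2.perZ hgper
  have hval : ∀ k, k < Q → f (x + (k : ℝ) * α) = g (r' k) := by
    intro k hk
    obtain ⟨z, hzk⟩ := hz k hk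
    have h1 : f (x + (k : ℝ) * α) = g ((k : ℝ) * α) := by
      show f (x + (k : ℝ) * α) = f ((k : ℝ) * α + x)
      rw [add_comm]
    rw [h1, hzk, hgZ]
  have hgint : ∀ a b : ℝ, IntervalIntegrable g MeasureTheory.volume a b := by
    intro a b
    have h := (DK2.f_intervalIntegrable hper hbv (a + x) (b + x)).comp_add_right x
    simpa using h
  have hgvar01 : eVariationOn g (Set.Icc 0 1) = eVariationOn f (Set.Icc 0 1) := by
    have h := DK2.var_translate f x 0 1
    rw [zero_add, show (1:ℝ) + x = x + 1 by ring] at h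
    show eVariationOn (fun t => f (t + x)) (Set.Icc 0 1) = _
    rw [h, DK2.var_window hper x]
  have hfin : eVariationOn g (Set.Icc 0 1) ≠ ⊤ := by rw [hgvar01]; exact hbv
  set aa : ℕ → ℝ := fun i => (i : ℝ) / Qr with haadef
  have hstep : ∀ i : ℕ, aa (i + 1) - aa i = 1 / Qr := by
    intro i
    show ((i + 1 : ℕ) : ℝ) / Qr - (i : ℝ) / Qr = 1 / Qr
    push_cast
    ring
  have haalt : ∀ i : ℕ, aa i < aa (i + 1) := by
    intro i
    have h1 := hstep i
    have h2 : 0 < 1 / Qr := by positivity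
    linarith
  have hsub : ∀ jx : ℕ, jx < Q → Set.Icc (aa jx) (aa (jx + 1)) ⊆ Set.Icc 0 1 := by
    intro jx hjx
    apply Set.Icc_subset_Icc
    · show (0:ℝ) ≤ (jx : ℝ) / Qr
      positivity
    · show ((jx + 1 : ℕ) : ℝ) / Qr ≤ 1
      rw [div_le_one hQrpos]
      have h1 : ((jx + 1 : ℕ) : ℝ) ≤ ((Q : ℕ) : ℝ) := by exact_mod_cast Nat.succ_le_of_lt hjx
      rw [hQrQ] at h1
      exact h1
  have hbvj : ∀ jx : ℕ, jx < Q → BoundedVariationOn g (Set.Icc (aa jx) (aa (jx + 1))) := by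
    intro jx hjx
    exact ne_top_of_le_ne_top hfin (eVariationOn.mono g (hsub jx hjx))
  have hg01 : (∫ t in (0:ℝ)..1, g t) = 0 := by
    have h1 : (∫ t in (0:ℝ)..1, g t) = ∫ t in (0 + x)..(1 + x), f t :=
      intervalIntegral.integral_comp_add_right f x
    have hp : Function.Periodic f 1 := hper
    have h2 := hp.intervalIntegral_add_eq x 0
    rw [zero_add] at h2
    rw [h1, zero_add, show (1:ℝ) + x = x + 1 by ring, h2, hmean]
  have hsum0 : ∑ jx ∈ Finset.range Q, (∫ t in aa jx..aa (jx + 1), g t) = 0 := by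
    rw [intervalIntegral.sum_integral_adjacent_intervals (fun k _ => hgint _ _)]
    have h0 : aa 0 = 0 := by show ((0:ℕ):ℝ)/Qr = 0; simp
    have hQa : aa Q = 1 := by
      show ((Q:ℕ):ℝ)/Qr = 1
      rw [hQrQ, div_self hq0]
    rw [h0, hQa, hg01]
  have hterm : ∀ k, k < Q → |g (r' k) - Qr * ∫ t in aa (jj k)..aa (jj k + 1), g t|
      ≤ (eVariationOn g (Set.Icc (aa (jj k)) (aa (jj k + 1)))).toReal := by
    intro k hk
    have hjk := hjlt k hk
    have hmem' : r' k ∈ Set.Icc (aa (jj k)) (aa (jj k + 1)) := by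
      have h := hmem k hk
      have e : aa (jj k + 1) = ((jj k : ℝ) + 1) / Qr := by
        show ((jj k + 1 : ℕ) : ℝ) / Qr = _
        push_cast
        ring
      rw [e]
      exact h
    have htb := DK2.term_bound (haalt (jj k)) hmem' (hgint _ _) (hbvj (jj k) hjk)
    rw [hstep (jj k)] at htb
    have hrw : g (r' k) - Qr * ∫ t in aa (jj k)..aa (jj k + 1), g t
        = Qr * (g (r' k) * (1 / Qr) - ∫ t in aa (jj k)..aa (jj k + 1), g t) := by
      field_simp
    rw [hrw, abs_mul, abs_of_pos hQrpos]
    calc Qr * |g (r' k) * (1 / Qr) - ∫ t in aa (jj k)..aa (jj k + 1), g t|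
        ≤ Qr * ((eVariationOn g (Set.Icc (aa (jj k)) (aa (jj k + 1)))).toReal * (1 / Qr)) :=
          mul_le_mul_of_nonneg_left htb hQrpos.le
      _ = _ := by field_simp
  have hvar_fin : ∀ jx ∈ Finset.range Q, eVariationOn g (Set.Icc (aa jx) (aa (jx + 1))) ≠ ⊤ :=
    fun jx hjx => hbvj jx (Finset.mem_range.1 hjx)
  have hsumvar : ∑ jx ∈ Finset.range Q, (eVariationOn g (Set.Icc (aa jx) (aa (jx + 1)))).toReal
      = (eVariationOn f (Set.Icc 0 1)).toReal := by
    rw [← ENNReal.toReal_sum hvar_fin]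
    congr 1
    rw [← hgvar01, ← DK2.var_partition g Q hQpos]
    apply Finset.sum_congr rfl
    intro jx _
    have e1 : aa jx = (jx : ℝ) / ((Q : ℕ) : ℝ) := by
      show (jx : ℝ) / Qr = _
      rw [hQrQ]
    have e2 : aa (jx + 1) = ((jx : ℝ) + 1) / ((Q : ℕ) : ℝ) := by
      show ((jx + 1 : ℕ) : ℝ) / Qr = _
      rw [hQrQ]
      push_cast
      ring
    rw [e1, e2]
  calc |∑ k ∈ Finset.range Q, f (x + (k : ℝ) * α)|
      = |∑ k ∈ Finset.range Q, g (r' k)| := by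
        congr 1
        exact Finset.sum_congr rfl fun k hk => hval k (Finset.mem_range.1 hk)
    _ = |∑ k ∈ Finset.range Q, (g (r' k) - Qr * ∫ t in aa (jj k)..aa (jj k + 1), g t)| := by
        rw [Finset.sum_sub_distrib]
        have h0 : ∑ k ∈ Finset.range Q, Qr * ∫ t in aa (jj k)..aa (jj k + 1), g t = 0 := by
          rw [← Finset.mul_sum]
          have h := DK2.sum_comp_inj jj hjlt hjinj (fun i => ∫ t in aa i..aa (i + 1), g t)
          rw [h, hsum0, mul_zero]
        rw [h0, sub_zero]
    _ ≤ ∑ k ∈ Finset.range Q, |g (r' k) - Qr * ∫ t in aa (jj k)..aa (jj k + 1), g t| :=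
        Finset.abs_sum_le_sum_abs _ _
    _ ≤ ∑ k ∈ Finset.range Q, (eVariationOn g (Set.Icc (aa (jj k)) (aa (jj k + 1)))).toReal :=
        Finset.sum_le_sum fun k hk => hterm k (Finset.mem_range.1 hk)
    _ = ∑ jx ∈ Finset.range Q, (eVariationOn g (Set.Icc (aa jx) (aa (jx + 1)))).toReal :=
        DK2.sum_comp_inj jj hjlt hjinj
          (fun i => (eVariationOn g (Set.Icc (aa i) (aa (i + 1)))).toReal)
    _ = (eVariationOn f (Set.Icc 0 1)).toReal := hsumvar

/-- Denjoy–Koksma inequality. -/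
theorem stmt7 (α : ℝ) (hα : α ∈ Set.Ioo (0 : ℝ) 1) (hirr : Irrational α)
    (f : ℝ → ℝ) (hper : ∀ x, f (x + 1) = f x)
    (hbv : BoundedVariationOn f (Set.Icc 0 1))
    (hmean : ∫ t in (0 : ℝ)..1, f t = 0) :
    ∀ n : ℕ, ∀ x : ℝ,
      |∑ k ∈ Finset.range (cfDen α n).toNat, f (x + (k : ℝ) * α)| ≤
        (eVariationOn f (Set.Icc 0 1)).toReal := by
  intro n x
  exact DK2.main α x f hper hbv hmean (cfDen α n) (cfNum α n)
    (DK.cfDen_pos hirr hα n) (DK.coprime hirr hα n) (DK.approx hirr hα n)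
end

section
/- Let (Ω, ℬ, P) be a probability space and let F, G be sub-σ-algebras of ℬ. Then ρ(F, G) ≤ 2·(φ(F, G))^{1/2}, where φ(F,G) = sup{|P(A∩B)/P(B) − P(A)| : A ∈ G, B ∈ F, P(B) > 0} and ρ(F,G) = sup |Cov(f,g)|/√(Var(f)·Var(g)), the supremum being over square-integrable F-measurable f and G-measurable g with Var(f) > 0 and Var(g) > 0. -/
open MeasureTheory

set_option linter.unusedSectionVars false
set_option linter.unusedVariables false
set_option maxHeartbeats 1000000

section Aux

variable {Ω : Type} {F G A : MeasurableSpace Ω} {m : MeasurableSpace Ω} {P : Measure Ω}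
  [IsProbabilityMeasure P]

lemma aux_int_mul_bdd {u v : Ω → ℝ} (hu : AEStronglyMeasurable u P)
    (hv : AEStronglyMeasurable v P) {b c : ℝ} (hub : ∀ᵐ x ∂P, |u x| ≤ b)
    (hvc : ∀ᵐ x ∂P, |v x| ≤ c) : Integrable (fun x => u x * v x) P := by
  refine Integrable.mono' (integrable_const (b * c)) (hu.mul hv) ?_
  filter_upwards [hub, hvc] with x h1 h2
  have h0 : (0:ℝ) ≤ b := le_trans (abs_nonneg _) h1
  calc ‖u x * v x‖ = |u x| * |v x| := abs_mul _ _
    _ ≤ b * c := mul_le_mul h1 h2 (abs_nonneg _) h0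

lemma aux_int_mul_L2 {u v : Ω → ℝ} (hu : MemLp u 2 P) (hv : MemLp v 2 P) :
    Integrable (fun x => u x * v x) P := by
  refine Integrable.mono' ((hu.integrable_sq.add hv.integrable_sq).div_const 2)
    (hu.aestronglyMeasurable.mul hv.aestronglyMeasurable) ?_
  refine Filter.Eventually.of_forall fun x => ?_
  have h := two_mul_le_add_sq |u x| |v x|
  simp only [Real.norm_eq_abs, abs_mul, Pi.add_apply]
  rw [sq_abs, sq_abs] at h
  nlinarith [abs_nonneg (u x), abs_nonneg (v x)]

lemma aux_integral_CS {u v : Ω → ℝ} (h2u : Integrable (fun x => u x ^ 2) P)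
    (h2v : Integrable (fun x => v x ^ 2) P)
    (huv : Integrable (fun x => u x * v x) P) :
    |∫ x, u x * v x ∂P| ≤ Real.sqrt (∫ x, u x ^ 2 ∂P) * Real.sqrt (∫ x, v x ^ 2 ∂P) := by
  set A := ∫ x, u x ^ 2 ∂P with hA
  set C := ∫ x, v x ^ 2 ∂P with hC
  set B := ∫ x, u x * v x ∂P with hB
  have hA0 : 0 ≤ A := integral_nonneg fun x => sq_nonneg _
  have hC0 : 0 ≤ C := integral_nonneg fun x => sq_nonneg _
  have key : ∀ t : ℝ, 0 ≤ A * (t * t) + (2 * B) * t + C := by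
    intro t
    have h1 : 0 ≤ ∫ x, (t * u x + v x) ^ 2 ∂P := integral_nonneg fun x => sq_nonneg _
    have h2 : ∫ x, (t * u x + v x) ^ 2 ∂P = A * (t * t) + (2 * B) * t + C := by
      have e0 : ∀ x, (t * u x + v x) ^ 2
          = (t ^ 2 * u x ^ 2 + (2 * t) * (u x * v x)) + v x ^ 2 := by intro x; ring
      have e1 : Integrable (fun x => t ^ 2 * u x ^ 2 + (2 * t) * (u x * v x)) P := by
        exact (h2u.const_mul _).add (huv.const_mul _)
      simp_rw [e0]
      rw [integral_add e1 h2v, integral_add (h2u.const_mul _) (huv.const_mul _),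
        integral_const_mul, integral_const_mul]
      ring
    linarith [h1.trans_eq h2]
  have hd := discrim_le_zero key
  rw [discrim] at hd
  have hBsq : B ^ 2 ≤ A * C := by nlinarith
  calc |B| = Real.sqrt (B ^ 2) := (Real.sqrt_sq_eq_abs B).symm
    _ ≤ Real.sqrt (A * C) := Real.sqrt_le_sqrt hBsq
    _ = Real.sqrt A * Real.sqrt C := Real.sqrt_mul hA0 _

lemma aux_condExp_le (hA : A ≤ m) {y : Ω → ℝ}
    (hy : Integrable y P) {c : ℝ}
    (h : ∀ B : Set Ω, MeasurableSet[A] B → ∫ x in B, y x ∂P ≤ c * (P B).toReal) :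
    ∀ᵐ x ∂P, (P[y|A]) x ≤ c := by
  set h₀ := P[y|A] with hh₀
  have hmeas : StronglyMeasurable[A] h₀ := stronglyMeasurable_condExp
  have hnull : ∀ n : ℕ, P {x | c + 1 / (n + 1) ≤ h₀ x} = 0 := by
    intro n
    set Bn := {x | c + 1 / (n + 1) ≤ h₀ x} with hBn
    have hBnA : MeasurableSet[A] Bn :=
      measurableSet_le measurable_const hmeas.measurable
    have hBnm : MeasurableSet[m] Bn := hA _ hBnA
    have h1 : (c + 1 / (n + 1)) * (P Bn).toReal ≤ ∫ x in Bn, h₀ x ∂P := by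
      refine setIntegral_ge_of_const_le_real hBnm (measure_ne_top _ _) (fun x hx => hx) ?_
      exact integrable_condExp.integrableOn
    have h2 : ∫ x in Bn, h₀ x ∂P = ∫ x in Bn, y x ∂P := setIntegral_condExp hA hy hBnA
    have h3 : ∫ x in Bn, y x ∂P ≤ c * (P Bn).toReal := h _ hBnA
    have h4 := (h1.trans_eq h2).trans h3
    have h5 : (P Bn).toReal = 0 := by
      have hpos : (0:ℝ) < 1 / ((n:ℝ)+1) := by positivity
      nlinarith [ENNReal.toReal_nonneg (a := P Bn)]
    exact (ENNReal.toReal_eq_zero_iff _).mp h5 |>.resolve_right (measure_ne_top _ _)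
  have hsub : {x | c < h₀ x} ⊆ ⋃ n : ℕ, {x | c + 1 / (n + 1) ≤ h₀ x} := by
    intro x hx
    obtain ⟨n, hn⟩ := exists_nat_one_div_lt (K := ℝ) (sub_pos.mpr hx)
    exact Set.mem_iUnion.mpr ⟨n, by simp only [Set.mem_setOf_eq]; linarith [hn.le]⟩
  have : P {x | c < h₀ x} = 0 :=
    measure_mono_null hsub (measure_iUnion_null fun n => hnull n)
  rw [ae_iff]
  convert this using 2
  ext x; simp [not_le]

lemma aux_condExp_abs_le (hA : A ≤ m) {y : Ω → ℝ}
    (hy : Integrable y P) {c : ℝ}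
    (h : ∀ B : Set Ω, MeasurableSet[A] B → |∫ x in B, y x ∂P| ≤ c * (P B).toReal) :
    ∀ᵐ x ∂P, |(P[y|A]) x| ≤ c := by
  have h1 : ∀ᵐ x ∂P, (P[y|A]) x ≤ c :=
    aux_condExp_le hA hy fun B hB => (le_abs_self _).trans (h B hB)
  have h2 : ∀ᵐ x ∂P, (P[(-y)|A]) x ≤ c := by
    refine aux_condExp_le hA hy.neg fun B hB => ?_
    have : ∫ x in B, (-y) x ∂P = -∫ x in B, y x ∂P := by
      simp [integral_neg]
    rw [this]
    exact (neg_le_abs _).trans (h B hB)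
  filter_upwards [h1, h2, condExp_neg (μ := P) y A] with x hx1 hx2 hx3
  rw [abs_le]
  constructor
  · have : -(P[y|A]) x ≤ c := by rw [← Pi.neg_apply, ← hx3]; exact hx2
    linarith
  · exact hx1

lemma aux_abs_integral {α : Type*} {mα : MeasurableSpace α} {μ : Measure α} (f : α → ℝ) :
    |∫ x, f x ∂μ| ≤ ∫ x, |f x| ∂μ := by
  simpa [Real.norm_eq_abs] using norm_integral_le_integral_norm (μ := μ) f

lemma aux_setIntegral_abs_bound {y : Ω → ℝ} {b : ℝ} (hy : Integrable y P)
    (hybd : ∀ᵐ x ∂P, |y x| ≤ b) {B : Set Ω} (hB : MeasurableSet[m] B) :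
    |∫ x in B, y x ∂P| ≤ b * (P B).toReal := by
  have h1 : |∫ x in B, y x ∂P| ≤ ∫ x in B, |y x| ∂P := aux_abs_integral _
  have h2 : ∫ x in B, |y x| ∂P ≤ ∫ x in B, b ∂P := by
    refine integral_mono_ae hy.abs.integrableOn (integrable_const b).integrableOn ?_
    exact ae_restrict_of_ae hybd
  have h3 : ∫ x in B, b ∂P = b * (P B).toReal := by
    rw [setIntegral_const, smul_eq_mul, mul_comm, measureReal_def]
  linarith

lemma aux_cov_indicator_bound (hG : G ≤ m) (hF : F ≤ m) {φ : ℝ}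
    (hφ : ∀ A' B : Set Ω, MeasurableSet[G] A' → MeasurableSet[F] B →
      |(P (A' ∩ B)).toReal - (P A').toReal * (P B).toReal| ≤ φ * (P B).toReal)
    {y : Ω → ℝ} {b : ℝ} (hb : 0 ≤ b) (hySM : StronglyMeasurable[G] y)
    (hybd : ∀ᵐ x ∂P, |y x| ≤ b) (hy0 : ∫ x, y x ∂P = 0)
    {B : Set Ω} (hB : MeasurableSet[F] B) :
    |∫ x in B, y x ∂P| ≤ 2 * φ * b * (P B).toReal := by
  have hBm : MeasurableSet[m] B := hF _ hB
  have hym : AEStronglyMeasurable y P := (hySM.mono hG).aestronglyMeasurable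
  have hyint : Integrable y P := by
    refine Integrable.mono' (integrable_const b) hym ?_
    filter_upwards [hybd] with x hx using by simpa using hx
  set u := fun x => y x + b with hu
  have huint : Integrable u P := by exact hyint.add (integrable_const b)
  have hu_nn : 0 ≤ᵐ[P] u := by
    filter_upwards [hybd] with x hx
    simp only [hu, Pi.zero_apply]
    linarith [abs_le.mp hx |>.1]
  have hu_ub : u ≤ᵐ[P] fun _ => 2 * b := by
    filter_upwards [hybd] with x hx; simp only [hu]; linarith [abs_le.mp hx |>.2]
  have hu_integral : ∫ x, u x ∂P = b := by
    rw [integral_add hyint (integrable_const b), hy0, integral_const]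
    simp
  -- measurability of upper level sets in G
  have humeasG : Measurable[G] u := (hySM.measurable.add_const b)
  have hUt : ∀ t : ℝ, MeasurableSet[G] {a | t ≤ u a} :=
    fun t => measurableSet_le measurable_const humeasG
  set v := B.indicator u with hv
  have hvint : Integrable v P := huint.indicator hBm
  have hv_nn : 0 ≤ᵐ[P] v := by
    filter_upwards [hu_nn] with x hx
    by_cases hxB : x ∈ B
    · simpa [hv, Set.indicator_of_mem hxB] using hx
    · simp [hv, Set.indicator_of_notMem hxB]
  have hv_ub : v ≤ᵐ[P] fun _ => 2 * b := by
    filter_upwards [hu_ub] with x hx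
    by_cases hxB : x ∈ B
    · simpa [hv, Set.indicator_of_mem hxB] using hx
    · simp only [hv, Set.indicator_of_notMem hxB]
      positivity
  have key1 : ∫ x, v x ∂P = ∫ t in Set.Ioc 0 (2*b),
      (P ({a | t ≤ u a} ∩ B)).toReal := by
    rw [hvint.integral_eq_integral_Ioc_meas_le hv_nn hv_ub]
    refine setIntegral_congr_fun measurableSet_Ioc fun t ht => ?_
    have hset : {a | t ≤ v a} = {a | t ≤ u a} ∩ B := by
      ext a
      simp only [Set.mem_setOf_eq, hv, Set.mem_inter_iff]
      by_cases ha : a ∈ B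
      · simp [Set.indicator_of_mem ha, ha]
      · simp only [Set.indicator_of_notMem ha, ha, and_false, iff_false, not_le]
        exact ht.1
    rw [hset, measureReal_def]
  have key2 : ∫ x, u x ∂P = ∫ t in Set.Ioc 0 (2*b), (P {a | t ≤ u a}).toReal :=
    huint.integral_eq_integral_Ioc_meas_le hu_nn hu_ub
  -- integrability in t
  have hmono1 : Antitone (fun t : ℝ => P ({a | t ≤ u a} ∩ B)) := by
    intro s t hst
    exact measure_mono (Set.inter_subset_inter_left _ fun a ha => le_trans hst ha)
  have hmono2 : Antitone (fun t : ℝ => P {a | t ≤ u a}) := by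
    intro s t hst
    exact measure_mono fun a ha => le_trans hst ha
  have hint1 : IntegrableOn (fun t : ℝ => (P ({a | t ≤ u a} ∩ B)).toReal)
      (Set.Ioc 0 (2*b)) := by
    refine Integrable.mono'
      ((integrableOn_const measure_Ioc_lt_top.ne) :
        IntegrableOn (fun _ : ℝ => (1:ℝ)) (Set.Ioc 0 (2*b)) volume)
      (hmono1.measurable.ennreal_toReal.aestronglyMeasurable) ?_
    refine Filter.Eventually.of_forall fun t => ?_
    rw [Real.norm_eq_abs, abs_of_nonneg ENNReal.toReal_nonneg]
    exact (ENNReal.toReal_le_of_le_ofReal zero_le_one (by simpa using prob_le_one))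
  have hint2 : IntegrableOn (fun t : ℝ => (P {a | t ≤ u a}).toReal)
      (Set.Ioc 0 (2*b)) := by
    refine Integrable.mono'
      ((integrableOn_const measure_Ioc_lt_top.ne) :
        IntegrableOn (fun _ : ℝ => (1:ℝ)) (Set.Ioc 0 (2*b)) volume)
      (hmono2.measurable.ennreal_toReal.aestronglyMeasurable) ?_
    refine Filter.Eventually.of_forall fun t => ?_
    rw [Real.norm_eq_abs, abs_of_nonneg ENNReal.toReal_nonneg]
    exact (ENNReal.toReal_le_of_le_ofReal zero_le_one (by simpa using prob_le_one))
  -- the set integral over B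
  have hBy : ∫ x in B, y x ∂P
      = ∫ t in Set.Ioc 0 (2*b),
          ((P ({a | t ≤ u a} ∩ B)).toReal
            - (P {a | t ≤ u a}).toReal * (P B).toReal) := by
    have e1 : ∫ x in B, y x ∂P = (∫ x in B, u x ∂P) - b * (P B).toReal := by
      have : ∫ x in B, u x ∂P = (∫ x in B, y x ∂P) + b * (P B).toReal := by
        rw [integral_add hyint.integrableOn (integrable_const b).integrableOn,
          setIntegral_const, smul_eq_mul, mul_comm, measureReal_def]
      linarith
    have e2 : ∫ x in B, u x ∂P = ∫ x, v x ∂P := (integral_indicator hBm).symm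
    have e3 : b * (P B).toReal
        = ∫ t in Set.Ioc 0 (2*b), (P {a | t ≤ u a}).toReal * (P B).toReal := by
      rw [integral_mul_const, ← key2, hu_integral]
    rw [e1, e2, key1, e3, ← integral_sub hint1 (hint2.mul_const _)]
  rw [hBy]
  have hbound : |∫ t in Set.Ioc 0 (2*b),
      ((P ({a | t ≤ u a} ∩ B)).toReal - (P {a | t ≤ u a}).toReal * (P B).toReal)|
      ≤ ∫ t in Set.Ioc 0 (2*b), (φ * (P B).toReal) := by
    calc |∫ t in Set.Ioc 0 (2*b),
        ((P ({a | t ≤ u a} ∩ B)).toReal - (P {a | t ≤ u a}).toReal * (P B).toReal)|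
        ≤ ∫ t in Set.Ioc 0 (2*b),
          |(P ({a | t ≤ u a} ∩ B)).toReal - (P {a | t ≤ u a}).toReal * (P B).toReal| :=
        aux_abs_integral _
      _ ≤ ∫ t in Set.Ioc 0 (2*b), (φ * (P B).toReal) := by
        refine integral_mono_ae (hint1.sub (hint2.mul_const _)).abs
          (integrableOn_const measure_Ioc_lt_top.ne) ?_
        refine Filter.Eventually.of_forall fun t => hφ _ B (hUt t) hB
  have hvol : ∫ t in Set.Ioc 0 (2*b), (φ * (P B).toReal) ∂(volume : Measure ℝ)
      = 2 * φ * b * (P B).toReal := by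
    rw [setIntegral_const, smul_eq_mul, measureReal_def, Real.volume_Ioc]
    rw [ENNReal.toReal_ofReal (by linarith)]
    ring
  calc _ ≤ _ := hbound
    _ = _ := hvol

lemma aux_int_of_bdd {y : Ω → ℝ} {b : ℝ} (hy : AEStronglyMeasurable y P)
    (hybd : ∀ᵐ x ∂P, |y x| ≤ b) : Integrable y P := by
  refine Integrable.mono' (integrable_const b) hy ?_
  filter_upwards [hybd] with x hx using by simpa using hx

lemma aux_condExp_phi_bound (hG : G ≤ m) (hF : F ≤ m) {φ : ℝ}
    (hφ : ∀ A' B : Set Ω, MeasurableSet[G] A' → MeasurableSet[F] B →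
      |(P (A' ∩ B)).toReal - (P A').toReal * (P B).toReal| ≤ φ * (P B).toReal)
    {y : Ω → ℝ} {b : ℝ} (hb : 0 ≤ b) (hySM : StronglyMeasurable[G] y)
    (hybd : ∀ᵐ x ∂P, |y x| ≤ b) (hy0 : ∫ x, y x ∂P = 0) :
    ∀ᵐ x ∂P, |(P[y|F]) x| ≤ 2 * φ * b := by
  have hyint : Integrable y P := aux_int_of_bdd (hySM.mono hG).aestronglyMeasurable hybd
  exact aux_condExp_abs_le hF hyint fun B hB =>
    aux_cov_indicator_bound hG hF hφ hb hySM hybd hy0 hB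

lemma aux_condExp_contract {A : MeasurableSpace Ω} (hA : A ≤ m) {y : Ω → ℝ} {b : ℝ}
    (hy : Integrable y P) (hybd : ∀ᵐ x ∂P, |y x| ≤ b) :
    ∀ᵐ x ∂P, |(P[y|A]) x| ≤ b :=
  aux_condExp_abs_le hA hy fun B hB => aux_setIntegral_abs_bound hy hybd (hA _ hB)

lemma aux_pullout {A : MeasurableSpace Ω} (hA : A ≤ m) {u x : Ω → ℝ}
    (hu : StronglyMeasurable[A] u) (hx : Integrable x P)
    (hux : Integrable (fun a => u a * x a) P) :
    ∫ a, u a * (P[x|A]) a ∂P = ∫ a, u a * x a ∂P := by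
  haveI : IsFiniteMeasure (P.trim hA) := isFiniteMeasure_trim hA
  have h1 : P[(u * x : Ω → ℝ)|A] =ᵐ[P] u * P[x|A] :=
    condExp_mul_of_stronglyMeasurable_left hu (by exact hux) hx
  calc ∫ a, u a * (P[x|A]) a ∂P = ∫ a, (P[(u * x : Ω → ℝ)|A]) a ∂P :=
        (integral_congr_ae h1).symm
    _ = ∫ a, (u * x) a ∂P := integral_condExp hA
    _ = ∫ a, u a * x a ∂P := rfl

lemma aux_core_bdd (hG : G ≤ m) (hF : F ≤ m) {φ : ℝ} (hφ0 : 0 ≤ φ)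
    (hφ : ∀ A' B : Set Ω, MeasurableSet[G] A' → MeasurableSet[F] B →
      |(P (A' ∩ B)).toReal - (P A').toReal * (P B).toReal| ≤ φ * (P B).toReal)
    {g0 : Ω → ℝ} {C : ℝ} (hC : 0 ≤ C) (hg0 : StronglyMeasurable[G] g0)
    (hg0b : ∀ᵐ x ∂P, |g0 x| ≤ C) (hg00 : ∫ x, g0 x ∂P = 0) :
    ∫ x, ((P[g0|F]) x) ^ 2 ∂P ≤ 2 * φ * ∫ x, (g0 x) ^ 2 ∂P := by
  haveI : IsFiniteMeasure (P.trim hF) := isFiniteMeasure_trim hF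
  haveI : IsFiniteMeasure (P.trim hG) := isFiniteMeasure_trim hG
  set σα : ℕ → MeasurableSpace Ω := fun k => if k % 2 = 0 then F else G with hσα
  have hσα_le : ∀ k, σα k ≤ m := by
    intro k; rw [hσα]; dsimp only; split <;> assumption
  set z : ℕ → Ω → ℝ := fun k => Nat.rec g0 (fun k zk => P[zk | σα k]) k with hz
  have hz0 : z 0 = g0 := rfl
  have hzs : ∀ k, z (k + 1) = P[z k | σα k] := fun k => rfl
  set Bd : ℕ → ℝ := fun k => (2 * φ) ^ ((k + 1) / 2) * C with hBd
  have hBd0 : ∀ k, 0 ≤ Bd k := fun k => by positivity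
  -- main invariant
  have inv : ∀ k, Integrable (z k) P ∧ (∀ᵐ x ∂P, |z k x| ≤ Bd k) ∧ (∫ x, z k x ∂P = 0)
      ∧ (if k % 2 = 0 then StronglyMeasurable[G] (z k) else StronglyMeasurable[F] (z k)) := by
    intro k
    induction k with
    | zero =>
      refine ⟨aux_int_of_bdd (hg0.mono hG).aestronglyMeasurable (by simpa [hBd, hz0] using hg0b),
        by simpa [hBd, hz0] using hg0b, hg00, by simpa [hz0] using hg0⟩
    | succ k ih =>
      obtain ⟨hint, hbd, h0, hmeas⟩ := ih
      rcases Nat.even_or_odd k with hk | hk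
      · -- k even : condition on F
        have hk2 : k % 2 = 0 := Nat.even_iff.mp hk
        have hσ : σα k = F := by rw [hσα]; simp [hk2]
        have hmG : StronglyMeasurable[G] (z k) := by simpa [hk2] using hmeas
        have hbd' : ∀ᵐ x ∂P, |(P[z k | F]) x| ≤ 2 * φ * Bd k :=
          aux_condExp_phi_bound hG hF hφ (hBd0 k) hmG hbd h0
        have hBdsucc : Bd (k + 1) = 2 * φ * Bd k := by
          simp only [hBd]
          have h : (k + 1 + 1) / 2 = (k + 1) / 2 + 1 := by omega
          rw [h]
          ring
        constructor
        · rw [hzs, hσ]; exact integrable_condExp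
        refine ⟨?_, ?_, ?_⟩
        · rw [hzs, hσ, hBdsucc]; exact hbd'
        · rw [hzs, hσ, integral_condExp hF]; exact h0
        · have : (k + 1) % 2 = 1 := by omega
          rw [hzs, hσ]; simp only [this]
          simpa using (stronglyMeasurable_condExp : StronglyMeasurable[F] (P[z k | F]))
      · -- k odd : condition on G
        have hk2 : k % 2 = 1 := Nat.odd_iff.mp hk
        have hσ : σα k = G := by rw [hσα]; simp [hk2]
        have hBdsucc : Bd (k + 1) = Bd k := by
          simp only [hBd]
          have h : (k + 1 + 1) / 2 = (k + 1) / 2 := by omega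
          rw [h]
        constructor
        · rw [hzs, hσ]; exact integrable_condExp
        refine ⟨?_, ?_, ?_⟩
        · rw [hzs, hσ, hBdsucc]; exact aux_condExp_contract hG hint hbd
        · rw [hzs, hσ, integral_condExp hG]; exact h0
        · have : (k + 1) % 2 = 0 := by omega
          rw [hzs, hσ]; simp only [this]
          simpa using (stronglyMeasurable_condExp : StronglyMeasurable[G] (P[z k | G]))
  have hzaesm : ∀ k, AEStronglyMeasurable (z k) P := by
    intro k
    rcases Nat.even_or_odd k with hk | hk
    · have hk2 : k % 2 = 0 := Nat.even_iff.mp hk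
      have := (inv k).2.2.2; rw [if_pos hk2] at this
      exact (this.mono hG).aestronglyMeasurable
    · have hk2 : k % 2 = 1 := Nat.odd_iff.mp hk
      have := (inv k).2.2.2; rw [if_neg (by omega)] at this
      exact (this.mono hF).aestronglyMeasurable
  have hprod_int : ∀ j k, Integrable (fun x => z j x * z k x) P := fun j k =>
    aux_int_mul_bdd (hzaesm j) (hzaesm k) (inv j).2.1 (inv k).2.1
  have hsq_int : ∀ k, Integrable (fun x => z k x ^ 2) P := by
    intro k
    have := hprod_int k k
    simpa [pow_two] using this
  set n : ℕ → ℝ := fun k => ∫ x, (z k x) ^ 2 ∂P with hn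
  have hn_nonneg : ∀ k, 0 ≤ n k := fun k => integral_nonneg fun x => sq_nonneg _
  -- z (k+1) is strongly measurable wrt σα k
  have hzsm : ∀ k, StronglyMeasurable[σα k] (z (k + 1)) := by
    intro k; rw [hzs]; exact stronglyMeasurable_condExp
  -- z k is strongly measurable wrt σα (k+1)
  have hzsm' : ∀ k, StronglyMeasurable[σα (k + 1)] (z k) := by
    intro k
    rcases Nat.even_or_odd k with hk | hk
    · have hk2 : k % 2 = 0 := Nat.even_iff.mp hk
      have hσ : σα (k + 1) = G := by rw [hσα]; simp; omega
      have := (inv k).2.2.2; rw [if_pos hk2] at this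
      rwa [hσ]
    · have hk2 : k % 2 = 1 := Nat.odd_iff.mp hk
      have hσ : σα (k + 1) = F := by rw [hσα]; simp; omega
      have := (inv k).2.2.2; rw [if_neg (by omega)] at this
      rwa [hσ]
  have id1 : ∀ k, n (k + 1) = ∫ x, z (k + 1) x * z k x ∂P := by
    intro k
    have h := aux_pullout (hσα_le k) (hzsm k) (inv k).1 (hprod_int (k+1) k)
    have e : ∀ x, z (k+1) x ^ 2 = z (k+1) x * (P[z k | σα k]) x := by
      intro x; rw [← hzs]; ring
    calc n (k + 1) = ∫ x, z (k+1) x * (P[z k | σα k]) x ∂P := by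
          rw [hn]; exact integral_congr_ae (Filter.Eventually.of_forall e)
      _ = ∫ x, z (k + 1) x * z k x ∂P := h
  have id2 : ∀ k, ∫ x, z k x * z (k + 1) x ∂P = ∫ x, z k x * z (k + 2) x ∂P := by
    intro k
    have h := aux_pullout (hσα_le (k+1)) (hzsm' k) (inv (k+1)).1 (hprod_int k (k+1))
    have : z (k + 2) = P[z (k+1) | σα (k+1)] := hzs (k+1)
    rw [this]
    exact h.symm
  have id3 : ∀ k, n (k + 1) = ∫ x, z k x * z (k + 2) x ∂P := by
    intro k
    rw [id1 k, ← id2 k]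
    exact integral_congr_ae (Filter.Eventually.of_forall fun x => mul_comm _ _)
  -- log-convexity
  have hCS : ∀ k, n (k + 1) ^ 2 ≤ n k * n (k + 2) := by
    intro k
    have h := aux_integral_CS (hsq_int k) (hsq_int (k+2)) (hprod_int k (k+2))
    rw [← id3 k] at h
    have h2 : n (k+1) ≤ Real.sqrt (n k) * Real.sqrt (n (k+2)) :=
      le_trans (le_abs_self _) h
    have h3 : Real.sqrt (n k) * Real.sqrt (n (k+2)) = Real.sqrt (n k * n (k+2)) :=
      (Real.sqrt_mul (hn_nonneg k) _).symm
    rw [h3] at h2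
    calc n (k+1) ^ 2 ≤ Real.sqrt (n k * n (k+2)) ^ 2 := by
          have := hn_nonneg (k+1)
          nlinarith
      _ = n k * n (k+2) := Real.sq_sqrt (mul_nonneg (hn_nonneg k) (hn_nonneg (k+2)))
  -- contraction
  have hcontr : ∀ k, n (k + 1) ≤ n k := by
    intro k
    have h := aux_integral_CS (hsq_int (k+1)) (hsq_int k) (hprod_int (k+1) k)
    rw [← id1 k] at h
    have h2 : n (k+1) ≤ Real.sqrt (n (k+1)) * Real.sqrt (n k) := le_trans (le_abs_self _) h
    rcases (hn_nonneg (k+1)).eq_or_lt with h0 | hpos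
    · rw [← h0]; exact hn_nonneg k
    · nlinarith [Real.sq_sqrt (hn_nonneg (k+1)), Real.sq_sqrt (hn_nonneg k),
        Real.sqrt_nonneg (n (k+1)), Real.sqrt_nonneg (n k)]
  -- bound n k by Bd k ^ 2
  have hnbd : ∀ k, n k ≤ Bd k ^ 2 := by
    intro k
    have h1 : ∀ᵐ x ∂P, z k x ^ 2 ≤ Bd k ^ 2 := by
      filter_upwards [(inv k).2.1] with x hx
      have := abs_nonneg (z k x)
      nlinarith [sq_abs (z k x)]
    calc n k ≤ ∫ _, Bd k ^ 2 ∂P := integral_mono_ae (hsq_int k) (integrable_const _) h1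
      _ = Bd k ^ 2 := by simp
  -- conclude : n 1 ≤ 2 φ n 0
  have main : n 1 ≤ 2 * φ * n 0 := by
    rcases (hn_nonneg 1).eq_or_lt with h0 | h1pos
    · rw [← h0]; positivity
    · by_contra hcon
      push_neg at hcon
      have hn0pos : 0 < n 0 := lt_of_lt_of_le h1pos (hcontr 0)
      have hφpos : 0 < φ := by
        rcases hφ0.eq_or_lt with h | h
        · exfalso
          have := hnbd 1
          rw [hBd] at this
          simp only [← h] at this
          norm_num at this
          exact absurd (h1pos.trans_le this) (lt_irrefl 0)
        · exact h
      have hQ : ∀ k, 0 < n k ∧ n 1 * n k ≤ n 0 * n (k + 1) := by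
        intro k
        induction k with
        | zero => exact ⟨hn0pos, le_of_eq (mul_comm _ _)⟩
        | succ k ih =>
          obtain ⟨hpos, hineq⟩ := ih
          have hpos' : 0 < n (k + 1) := by nlinarith
          refine ⟨hpos', ?_⟩
          have h1 := hCS k
          nlinarith
      have hR : ∀ k, n 1 ^ k * n 0 ≤ n 0 ^ k * n k := by
        intro k
        induction k with
        | zero => simp
        | succ k ih =>
          have h1 : n 1 ^ (k+1) * n 0 = n 1 * (n 1 ^ k * n 0) := by ring
          have h2 : n 1 * (n 1 ^ k * n 0) ≤ n 1 * (n 0 ^ k * n k) :=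
            mul_le_mul_of_nonneg_left ih (hn_nonneg 1)
          have h3 : n 1 * (n 0 ^ k * n k) = n 0 ^ k * (n 1 * n k) := by ring
          have h4 : n 0 ^ k * (n 1 * n k) ≤ n 0 ^ k * (n 0 * n (k+1)) :=
            mul_le_mul_of_nonneg_left (hQ k).2 (by positivity)
          calc n 1 ^ (k+1) * n 0 = n 1 * (n 1 ^ k * n 0) := h1
            _ ≤ n 1 * (n 0 ^ k * n k) := h2
            _ = n 0 ^ k * (n 1 * n k) := h3
            _ ≤ n 0 ^ k * (n 0 * n (k+1)) := h4
            _ = n 0 ^ (k+1) * n (k+1) := by ring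
      set D := n 1 / (2 * φ * n 0) with hD
      have hden : 0 < 2 * φ * n 0 := by positivity
      have hDgt : 1 < D := (one_lt_div hden).mpr hcon
      have hkey : ∀ j : ℕ, D ^ (2*j) ≤ C ^ 2 / n 0 := by
        intro j
        have h1 := hR (2*j)
        have h2 : n (2*j) ≤ (2*φ) ^ (2*j) * C ^ 2 := by
          have hb := hnbd (2*j)
          have he : (2*j + 1)/2 = j := by omega
          simp only [hBd, he] at hb
          calc n (2*j) ≤ ((2*φ) ^ j * C) ^ 2 := hb
            _ = (2*φ) ^ (2*j) * C ^ 2 := by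
              rw [mul_pow, ← pow_mul, Nat.mul_comm j 2]
        have h3 : n 1 ^ (2*j) * n 0 ≤ (2 * φ * n 0) ^ (2*j) * C ^ 2 := by
          calc n 1 ^ (2*j) * n 0 ≤ n 0 ^ (2*j) * n (2*j) := h1
            _ ≤ n 0 ^ (2*j) * ((2*φ) ^ (2*j) * C ^ 2) :=
              mul_le_mul_of_nonneg_left h2 (by positivity)
            _ = (2 * φ * n 0) ^ (2*j) * C ^ 2 := by rw [mul_pow]; ring
        rw [hD, div_pow, div_le_div_iff₀ (by positivity) hn0pos]
        calc n 1 ^ (2*j) * n 0 ≤ (2 * φ * n 0) ^ (2*j) * C ^ 2 := h3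
          _ = C ^ 2 * (2 * φ * n 0) ^ (2*j) := by ring
      obtain ⟨N, hN⟩ := pow_unbounded_of_one_lt (C ^ 2 / n 0) hDgt
      have hmono : D ^ N ≤ D ^ (2*N) := by
        apply pow_le_pow_right₀ hDgt.le
        omega
      have := (hN.trans_le hmono).trans_le (hkey N)
      exact absurd this (lt_irrefl _)
  have hz1 : z 1 = P[g0|F] := by
    have h01 := hzs 0
    have hs0 : σα 0 = F := by simp [hσα]
    rw [hs0, hz0] at h01
    simpa using h01
  calc ∫ x, ((P[g0|F]) x) ^ 2 ∂P = n 1 := by simp only [hn, hz1]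
    _ ≤ 2 * φ * n 0 := main
    _ = 2 * φ * ∫ x, (g0 x) ^ 2 ∂P := by simp only [hn, hz0]

lemma aux_cov_bdd (hG : G ≤ m) (hF : F ≤ m) {φ : ℝ} (hφ0 : 0 ≤ φ)
    (hφ : ∀ A' B : Set Ω, MeasurableSet[G] A' → MeasurableSet[F] B →
      |(P (A' ∩ B)).toReal - (P A').toReal * (P B).toReal| ≤ φ * (P B).toReal)
    {fb : Ω → ℝ} (hfbm : StronglyMeasurable[F] fb) (hfb2 : MemLp fb 2 P)
    {g0 : Ω → ℝ} {C : ℝ} (hC : 0 ≤ C) (hg0 : StronglyMeasurable[G] g0)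
    (hg0b : ∀ᵐ x ∂P, |g0 x| ≤ C) (hg00 : ∫ x, g0 x ∂P = 0) :
    |∫ x, fb x * g0 x ∂P| ≤ Real.sqrt (2 * φ) * Real.sqrt (∫ x, fb x ^ 2 ∂P)
      * Real.sqrt (∫ x, (g0 x) ^ 2 ∂P) := by
  have hg0aesm : AEStronglyMeasurable g0 P := (hg0.mono hG).aestronglyMeasurable
  have hg0int : Integrable g0 P := aux_int_of_bdd hg0aesm hg0b
  have hg0L2 : MemLp g0 2 P := MemLp.of_bound hg0aesm C (by
    filter_upwards [hg0b] with x hx using by simpa using hx)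
  have hfbg0 : Integrable (fun x => fb x * g0 x) P := aux_int_mul_L2 hfb2 hg0L2
  set h := P[g0|F] with hh
  have hhbd : ∀ᵐ x ∂P, |h x| ≤ C := aux_condExp_contract hF hg0int hg0b
  have hhaesm : AEStronglyMeasurable h P :=
    ((stronglyMeasurable_condExp (m := F)).mono hF).aestronglyMeasurable
  have hhL2 : MemLp h 2 P := MemLp.of_bound hhaesm C (by
    filter_upwards [hhbd] with x hx using by simpa using hx)
  have e1 : ∫ x, fb x * g0 x ∂P = ∫ x, fb x * h x ∂P :=
    (aux_pullout hF hfbm hg0int hfbg0).symm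
  have hCS : |∫ x, fb x * h x ∂P| ≤ Real.sqrt (∫ x, fb x ^ 2 ∂P)
      * Real.sqrt (∫ x, h x ^ 2 ∂P) :=
    aux_integral_CS hfb2.integrable_sq hhL2.integrable_sq (aux_int_mul_L2 hfb2 hhL2)
  have hcore : ∫ x, h x ^ 2 ∂P ≤ 2 * φ * ∫ x, (g0 x) ^ 2 ∂P :=
    aux_core_bdd hG hF hφ0 hφ hC hg0 hg0b hg00
  have h2 : Real.sqrt (∫ x, h x ^ 2 ∂P)
      ≤ Real.sqrt (2 * φ) * Real.sqrt (∫ x, (g0 x) ^ 2 ∂P) := by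
    rw [← Real.sqrt_mul (by positivity)]
    exact Real.sqrt_le_sqrt hcore
  calc |∫ x, fb x * g0 x ∂P| = |∫ x, fb x * h x ∂P| := by rw [e1]
    _ ≤ Real.sqrt (∫ x, fb x ^ 2 ∂P) * Real.sqrt (∫ x, h x ^ 2 ∂P) := hCS
    _ ≤ Real.sqrt (∫ x, fb x ^ 2 ∂P)
        * (Real.sqrt (2 * φ) * Real.sqrt (∫ x, (g0 x) ^ 2 ∂P)) :=
      mul_le_mul_of_nonneg_left h2 (Real.sqrt_nonneg _)
    _ = Real.sqrt (2 * φ) * Real.sqrt (∫ x, fb x ^ 2 ∂P)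
        * Real.sqrt (∫ x, (g0 x) ^ 2 ∂P) := by ring

lemma aux_sq_expand {f : Ω → ℝ} (h1 : Integrable f P)
    (h2 : Integrable (fun x => f x ^ 2) P) (c : ℝ) :
    ∫ x, (f x - c) ^ 2 ∂P = (∫ x, f x ^ 2 ∂P) - 2 * c * (∫ x, f x ∂P) + c ^ 2 := by
  have e : ∀ x, (f x - c) ^ 2 = (f x ^ 2 - (2 * c) * f x) + c ^ 2 := fun x => by ring
  have i1 : Integrable (fun x => f x ^ 2 - (2 * c) * f x) P := by
    exact h2.sub (h1.const_mul _)
  simp_rw [e]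
  rw [integral_add i1 (integrable_const _), integral_sub h2 (h1.const_mul _),
    integral_const_mul, integral_const]
  simp [measure_univ]

lemma aux_clamp_props (c : ℝ) (hc : 0 ≤ c) (t : ℝ) :
    |max (-c) (min c t)| ≤ c ∧ |max (-c) (min c t)| ≤ |t| ∧
      (|t| ≤ c → max (-c) (min c t) = t) := by
  have hub : max (-c) (min c t) ≤ c := max_le (by linarith) (min_le_left _ _)
  have hlb : -c ≤ max (-c) (min c t) := le_max_left _ _
  have habs_c : |max (-c) (min c t)| ≤ c := abs_le.mpr ⟨hlb, hub⟩
  have heq : |t| ≤ c → max (-c) (min c t) = t := by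
    intro h
    rw [min_eq_right (le_of_abs_le h), max_eq_right ((abs_le.mp h).1)]
  refine ⟨habs_c, ?_, heq⟩
  rcases le_total |t| c with h | h
  · rw [heq h]
  · exact habs_c.trans h

lemma aux_clamp_lipschitz (c : ℝ) (s t : ℝ) :
    |max (-c) (min c s) - max (-c) (min c t)| ≤ |s - t| := by
  have h1 : |min c s - min c t| ≤ |s - t| := by
    have := abs_min_sub_min_le_max c s c t
    simpa using this
  have h2 := abs_max_sub_max_le_max (-c) (min c s) (-c) (min c t)
  calc |max (-c) (min c s) - max (-c) (min c t)|
      ≤ max |(-c) - (-c)| |min c s - min c t| := h2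
    _ ≤ |s - t| := by
      rw [sub_self, abs_zero]
      exact max_le (abs_nonneg _) h1

lemma aux_cov_L2 (hG : G ≤ m) (hF : F ≤ m) {φ : ℝ} (hφ0 : 0 ≤ φ)
    (hφ : ∀ A' B : Set Ω, MeasurableSet[G] A' → MeasurableSet[F] B →
      |(P (A' ∩ B)).toReal - (P A').toReal * (P B).toReal| ≤ φ * (P B).toReal)
    {f g : Ω → ℝ} (hfm : Measurable[F] f) (hgm : Measurable[G] g)
    (hf2 : MemLp f 2 P) (hg2 : MemLp g 2 P) :
    |(∫ x, f x * g x ∂P) - (∫ x, f x ∂P) * (∫ x, g x ∂P)|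
      ≤ Real.sqrt (2 * φ) * Real.sqrt ((∫ x, f x ^ 2 ∂P) - (∫ x, f x ∂P) ^ 2)
        * Real.sqrt ((∫ x, g x ^ 2 ∂P) - (∫ x, g x ∂P) ^ 2) := by
  have hfint : Integrable f P := hf2.integrable one_le_two
  have hgint : Integrable g P := hg2.integrable one_le_two
  set af := ∫ x, f x ∂P with haf
  set ag := ∫ x, g x ∂P with hag
  set fb := fun x => f x - af with hfb
  have hfbm : StronglyMeasurable[F] fb :=
    (hfm.stronglyMeasurable).sub stronglyMeasurable_const
  have hfb2 : MemLp fb 2 P := hf2.sub (memLp_const af)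
  have hfbint : Integrable fb P := hfb2.integrable one_le_two
  have hfbaesm : AEStronglyMeasurable fb P := hfb2.aestronglyMeasurable
  have hfb0 : ∫ x, fb x ∂P = 0 := by
    simp only [hfb]
    rw [integral_sub hfint (integrable_const _), integral_const]
    simp [measure_univ, haf]
  have hVf : ∫ x, fb x ^ 2 ∂P = (∫ x, f x ^ 2 ∂P) - af ^ 2 := by
    simp only [hfb]
    rw [aux_sq_expand hfint hf2.integrable_sq af]
    ring
  have hVg : ∫ x, (g x - ag) ^ 2 ∂P = (∫ x, g x ^ 2 ∂P) - ag ^ 2 := by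
    rw [aux_sq_expand hgint hg2.integrable_sq ag]
    ring
  have hcov : (∫ x, f x * g x ∂P) - af * ag = ∫ x, fb x * g x ∂P := by
    have e : ∀ x, fb x * g x = f x * g x - af * g x := fun x => by
      simp only [hfb]; ring
    simp_rw [e]
    rw [integral_sub (aux_int_mul_L2 hf2 hg2) (hgint.const_mul af), integral_const_mul, hag]
  -- truncations
  set ψ : ℕ → Ω → ℝ := fun n x => max (-(n : ℝ)) (min (n : ℝ) (g x)) with hψ
  have hψprops : ∀ (n : ℕ) (x : Ω), |ψ n x| ≤ (n : ℝ) ∧ |ψ n x| ≤ |g x|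
      ∧ (|g x| ≤ (n : ℝ) → ψ n x = g x) := fun n x => by
    have h := aux_clamp_props (n : ℝ) (Nat.cast_nonneg n) (g x)
    exact ⟨h.1, h.2.1, h.2.2⟩
  have hψm : ∀ n, StronglyMeasurable[G] (ψ n) := fun n =>
    (measurable_const.max (measurable_const.min hgm)).stronglyMeasurable
  have hψaesm : ∀ n, AEStronglyMeasurable (ψ n) P := fun n =>
    ((hψm n).mono hG).aestronglyMeasurable
  have hψint : ∀ n, Integrable (ψ n) P := fun n =>
    aux_int_of_bdd (hψaesm n) (Filter.Eventually.of_forall fun x => (hψprops n x).1)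
  have hψL2 : ∀ n, MemLp (ψ n) 2 P := fun n =>
    MemLp.of_bound (hψaesm n) (n : ℝ)
      (Filter.Eventually.of_forall fun x => by simpa using (hψprops n x).1)
  have hψsqint : ∀ n, Integrable (fun x => ψ n x ^ 2) P := fun n => (hψL2 n).integrable_sq
  set a : ℕ → ℝ := fun n => ∫ x, ψ n x ∂P with ha
  have hae : ∀ n, ∫ x, ψ n x ∂P = a n := fun n => rfl
  set y : ℕ → Ω → ℝ := fun n x => ψ n x - a n with hy
  have hym : ∀ n, StronglyMeasurable[G] (y n) := fun n =>
    (hψm n).sub stronglyMeasurable_const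
  have hybd : ∀ n, ∀ x, |y n x| ≤ (n : ℝ) + |a n| := by
    intro n x
    simp only [hy]
    calc |ψ n x - a n| ≤ |ψ n x| + |a n| := by
          rw [sub_eq_add_neg]
          exact (abs_add_le _ _).trans (by rw [abs_neg])
      _ ≤ (n : ℝ) + |a n| := by linarith [(hψprops n x).1]
  have hy0 : ∀ n, ∫ x, y n x ∂P = 0 := by
    intro n
    simp only [hy]
    rw [integral_sub (hψint n) (integrable_const _), integral_const, hae n]
    simp [measure_univ]
  have hkey : ∀ n, |∫ x, fb x * ψ n x ∂P| ≤ Real.sqrt (2 * φ)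
      * Real.sqrt (∫ x, fb x ^ 2 ∂P) * Real.sqrt (∫ x, (g x - ag) ^ 2 ∂P) := by
    intro n
    have h1 := aux_cov_bdd hG hF hφ0 hφ hfbm hfb2 (C := (n : ℝ) + |a n|)
      (by positivity) (hym n) (Filter.Eventually.of_forall (hybd n)) (hy0 n)
    have e2 : ∫ x, fb x * y n x ∂P = ∫ x, fb x * ψ n x ∂P := by
      simp only [hy]
      have e : ∀ x, fb x * (ψ n x - a n) = fb x * ψ n x - a n * fb x := fun x => by ring
      simp_rw [e]
      rw [integral_sub (aux_int_mul_L2 hfb2 (hψL2 n)) (hfbint.const_mul _),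
        integral_const_mul, hfb0]
      simp
    have e3 : ∫ x, (y n x) ^ 2 ∂P ≤ ∫ x, (g x - ag) ^ 2 ∂P := by
      set cst := max (-(n : ℝ)) (min (n : ℝ) ag) with hcst
      have exp1 : ∫ x, (ψ n x - a n) ^ 2 ∂P
          = (∫ x, ψ n x ^ 2 ∂P) - 2 * (a n) * (a n) + (a n) ^ 2 := by
        rw [aux_sq_expand (hψint n) (hψsqint n) (a n), hae n]
      have exp2 : ∫ x, (ψ n x - cst) ^ 2 ∂P
          = (∫ x, ψ n x ^ 2 ∂P) - 2 * cst * (a n) + cst ^ 2 := by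
        rw [aux_sq_expand (hψint n) (hψsqint n) cst, hae n]
      have step1 : ∫ x, (y n x) ^ 2 ∂P ≤ ∫ x, (ψ n x - cst) ^ 2 ∂P := by
        simp only [hy]
        rw [exp1, exp2]
        nlinarith [sq_nonneg (a n - cst)]
      have step2 : ∫ x, (ψ n x - cst) ^ 2 ∂P ≤ ∫ x, (g x - ag) ^ 2 ∂P := by
        refine integral_mono_ae ((hψL2 n).sub (memLp_const cst)).integrable_sq
          ((hg2.sub (memLp_const ag)).integrable_sq)
          (Filter.Eventually.of_forall fun x => ?_)
        have h := aux_clamp_lipschitz (n : ℝ) (g x) ag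
        have h2 := mul_self_le_mul_self (abs_nonneg (ψ n x - cst)) h
        calc (ψ n x - cst) ^ 2 = |ψ n x - cst| * |ψ n x - cst| := by
              rw [← abs_mul, abs_mul_self]; ring
          _ ≤ |g x - ag| * |g x - ag| := h2
          _ = (g x - ag) ^ 2 := by rw [← abs_mul, abs_mul_self]; ring
      exact step1.trans step2
    rw [← e2]
    refine h1.trans ?_
    have hsq := Real.sqrt_le_sqrt e3
    exact mul_le_mul_of_nonneg_left hsq (by positivity)
  have hlim : Filter.Tendsto (fun n => ∫ x, fb x * ψ n x ∂P) Filter.atTop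
      (nhds (∫ x, fb x * g x ∂P)) := by
    refine tendsto_integral_of_dominated_convergence (fun x => |fb x| * |g x|)
      (fun n => hfbaesm.mul (hψaesm n)) ?_ (fun n => Filter.Eventually.of_forall fun x => ?_)
      (Filter.Eventually.of_forall fun x => ?_)
    · exact aux_int_mul_L2 hfb2.abs hg2.abs
    · rw [Real.norm_eq_abs, abs_mul]
      exact mul_le_mul_of_nonneg_left (hψprops n x).2.1 (abs_nonneg _)
    · refine tendsto_atTop_of_eventually_const (i₀ := ⌈|g x|⌉₊) fun n hn => ?_
      rw [(hψprops n x).2.2 ((Nat.le_ceil _).trans (Nat.cast_le.mpr hn))]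
  have hfinal : |∫ x, fb x * g x ∂P| ≤ Real.sqrt (2 * φ)
      * Real.sqrt (∫ x, fb x ^ 2 ∂P) * Real.sqrt (∫ x, (g x - ag) ^ 2 ∂P) :=
    le_of_tendsto hlim.abs (Filter.Eventually.of_forall hkey)
  rw [hcov, ← hVf, ← hVg]
  exact hfinal

end Aux

/-- `ρ(F,G) ≤ 2·φ(F,G)^{1/2}` for sub-σ-algebras `F`, `G` of a probability space,
where `φ` and `ρ` are expressed as suprema of the corresponding families of
real numbers. -/
theorem stmt8 {Ω : Type} [m : MeasurableSpace Ω] (P : Measure Ω)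
    [IsProbabilityMeasure P] (F G : MeasurableSpace Ω) (hF : F ≤ m) (hG : G ≤ m) :
    sSup {x : ℝ | ∃ f g : Ω → ℝ,
        Measurable[F] f ∧ Measurable[G] g ∧ MemLp f 2 P ∧ MemLp g 2 P ∧
        0 < (∫ ω, (f ω) ^ 2 ∂P) - (∫ ω, f ω ∂P) ^ 2 ∧
        0 < (∫ ω, (g ω) ^ 2 ∂P) - (∫ ω, g ω ∂P) ^ 2 ∧
        x = |(∫ ω, f ω * g ω ∂P) - (∫ ω, f ω ∂P) * (∫ ω, g ω ∂P)| /
          Real.sqrt ((((∫ ω, (f ω) ^ 2 ∂P) - (∫ ω, f ω ∂P) ^ 2)) *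
            (((∫ ω, (g ω) ^ 2 ∂P) - (∫ ω, g ω ∂P) ^ 2)))} ≤
      2 * Real.sqrt (sSup {x : ℝ | ∃ A B : Set Ω,
        MeasurableSet[G] A ∧ MeasurableSet[F] B ∧ 0 < P B ∧
        x = |(P (A ∩ B)).toReal / (P B).toReal - (P A).toReal|}) := by
  set Φ : Set ℝ := {x : ℝ | ∃ A B : Set Ω,
        MeasurableSet[G] A ∧ MeasurableSet[F] B ∧ 0 < P B ∧
        x = |(P (A ∩ B)).toReal / (P B).toReal - (P A).toReal|} with hΦ
  set φ := sSup Φ with hφdef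
  have h0mem : (0:ℝ) ∈ Φ := by
    refine ⟨∅, Set.univ, (MeasurableSet.empty : MeasurableSet[G] ∅),
      (MeasurableSet.univ : MeasurableSet[F] Set.univ), ?_, ?_⟩
    · rw [measure_univ]; exact one_pos
    · simp [measure_univ]
  have hbdd : BddAbove Φ := by
    refine ⟨1, fun x hx => ?_⟩
    obtain ⟨A, B, hA, hB, hPB, rfl⟩ := hx
    have hb0 : 0 < (P B).toReal := ENNReal.toReal_pos hPB.ne' (measure_ne_top _ _)
    have hab : (P (A ∩ B)).toReal ≤ (P B).toReal :=
      ENNReal.toReal_mono (measure_ne_top _ _) (measure_mono Set.inter_subset_right)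
    have hA1 : (P A).toReal ≤ 1 := by
      have h := ENNReal.toReal_mono (measure_ne_top P Set.univ)
        (measure_mono (Set.subset_univ A))
      simpa [measure_univ] using h
    have hdiv1 : (P (A ∩ B)).toReal / (P B).toReal ≤ 1 := (div_le_one hb0).mpr hab
    have hdiv0 : 0 ≤ (P (A ∩ B)).toReal / (P B).toReal := by positivity
    rw [abs_le]
    constructor <;> nlinarith [ENNReal.toReal_nonneg (a := P A)]
  have hφ0 : 0 ≤ φ := le_csSup hbdd h0mem
  have hφel : ∀ A B : Set Ω, MeasurableSet[G] A → MeasurableSet[F] B →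
      |(P (A ∩ B)).toReal - (P A).toReal * (P B).toReal| ≤ φ * (P B).toReal := by
    intro A B hA hB
    rcases eq_or_ne (P B) 0 with hPB | hPB
    · have h1 : P (A ∩ B) = 0 := measure_mono_null Set.inter_subset_right hPB
      simp [h1, hPB]
    · have hPBpos : 0 < P B := pos_iff_ne_zero.mpr hPB
      have hmem : |(P (A ∩ B)).toReal / (P B).toReal - (P A).toReal| ∈ Φ :=
        ⟨A, B, hA, hB, hPBpos, rfl⟩
      have hle : |(P (A ∩ B)).toReal / (P B).toReal - (P A).toReal| ≤ φ :=
        le_csSup hbdd hmem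
      have hb0 : 0 < (P B).toReal := ENNReal.toReal_pos hPB (measure_ne_top _ _)
      have h2 := mul_le_mul_of_nonneg_right hle hb0.le
      calc |(P (A ∩ B)).toReal - (P A).toReal * (P B).toReal|
          = |(P (A ∩ B)).toReal / (P B).toReal - (P A).toReal| * (P B).toReal := by
            rw [← abs_of_pos hb0, ← abs_mul]
            congr 1
            field_simp
            rw [abs_of_pos hb0]; ring
        _ ≤ φ * (P B).toReal := h2
  refine Real.sSup_le ?_ (by positivity)
  rintro x ⟨f, g, hfm, hgm, hf2, hg2, hVfpos, hVgpos, rfl⟩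
  have hmain := aux_cov_L2 hG hF hφ0 hφel hfm hgm hf2 hg2
  have hsqrt2 : Real.sqrt (2 * φ) ≤ 2 * Real.sqrt φ := by
    rw [Real.sqrt_mul (by norm_num) φ]
    have h2 : Real.sqrt 2 ≤ 2 := by
      nlinarith [Real.sq_sqrt (by norm_num : (0:ℝ) ≤ 2), Real.sqrt_nonneg 2]
    exact mul_le_mul_of_nonneg_right h2 (Real.sqrt_nonneg _)
  set Vf := (∫ ω, (f ω) ^ 2 ∂P) - (∫ ω, f ω ∂P) ^ 2 with hVf
  set Vg := (∫ ω, (g ω) ^ 2 ∂P) - (∫ ω, g ω ∂P) ^ 2 with hVg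
  have hprod : Real.sqrt (Vf * Vg) = Real.sqrt Vf * Real.sqrt Vg :=
    Real.sqrt_mul hVfpos.le _
  have hpos : 0 < Real.sqrt (Vf * Vg) := Real.sqrt_pos.mpr (mul_pos hVfpos hVgpos)
  rw [div_le_iff₀ hpos]
  calc |(∫ ω, f ω * g ω ∂P) - (∫ ω, f ω ∂P) * (∫ ω, g ω ∂P)|
      ≤ Real.sqrt (2 * φ) * Real.sqrt Vf * Real.sqrt Vg := hmain
    _ ≤ (2 * Real.sqrt φ) * Real.sqrt Vf * Real.sqrt Vg := by
        have h1 : 0 ≤ Real.sqrt Vf := Real.sqrt_nonneg _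
        have h2 : 0 ≤ Real.sqrt Vg := Real.sqrt_nonneg _
        nlinarith [hsqrt2]
    _ = 2 * Real.sqrt φ * Real.sqrt (Vf * Vg) := by rw [hprod]; ring
end
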